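/- arXiv:1810.07614 — 3 statements merged into one kernel-verified Lean document; each statement's English description precedes it below -/
import Mathlib

section
/- Let 1 ≤ p' < p < ∞, assume that X supports a p'-Poincaré inequality, and let ∅ ≠ Ω ⊊ X be an open set. Then Ω satisfies a pointwise p-Hardy inequality if and only if there are constants C_Γ > 0, ν > C_QC and κ ≥ 1 such that for each non-negative bounded lower semicontinuous g: X → [0,∞) vanishing on Ω^c and every x ∈ Ω one has inf_{γ ∈ Γ(X)^ν_{x,Ω^c}} ∫_γ g ds ≤ C_Γ d(x,Ω^c) M_{p,κ d(x,Ω^c)} g(x). -/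
open MeasureTheory Metric Set

section Defs

variable (X : Type*) [MetricSpace X]

/-- A curve, parametrized by arc length on `[0, len]`. -/
structure Curve where
  len : ℝ
  len_pos : 0 < len
  toFun : ℝ → X
  lip : LipschitzOnWith 1 toFun (Icc 0 len)

variable {X}

/-- The curve integral `∫_γ g ds` (with respect to arc length). -/
noncomputable def Curve.integral (γ : Curve X) (g : X → ℝ) : ℝ :=
  ∫ t in Icc (0:ℝ) γ.len, g (γ.toFun t)

/-- `γ` connects the point `x` to the point `y`. -/
def Curve.Connects (γ : Curve X) (x y : X) : Prop :=
  γ.toFun 0 = x ∧ γ.toFun γ.len = y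

/-- `γ` connects the point `x` to the set `E`. -/
def Curve.ConnectsSet (γ : Curve X) (x : X) (E : Set X) : Prop :=
  γ.toFun 0 = x ∧ γ.toFun γ.len ∈ E

/-- `g` is an upper gradient of `u`: `|u(x) - u(y)| ≤ ∫_γ g ds` for every curve
connecting `x` to `y`. -/
def IsUpperGradient (g u : X → ℝ) : Prop :=
  ∀ γ : Curve X, |u (γ.toFun 0) - u (γ.toFun γ.len)| ≤ γ.integral g

/-- `X` is `C`-quasiconvex: any two distinct points are connected by a curve of
length at most `C` times their distance. -/
def IsQuasiconvex (X : Type*) [MetricSpace X] (C : ℝ) : Prop :=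
  ∀ x y : X, x ≠ y → ∃ γ : Curve X, γ.Connects x y ∧ γ.len ≤ C * dist x y

variable [MeasurableSpace X]

/-- The `r`-restricted maximal function `M_{p,r} f(x)`. -/
noncomputable def restrMax (μ : Measure X) (p r : ℝ) (f : X → ℝ) (x : X) : ℝ :=
  if r = 0 then |f x|
  else sSup { m | ∃ y t, x ∈ ball y t ∧ 0 < t ∧ t < r ∧
    m = (⨍ z in ball y t, |f z| ^ p ∂μ) ^ (1/p) }

/-- `μ` is doubling with constant `D`. -/
def IsDoubling (μ : Measure X) (D : ℝ) : Prop :=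
  ∀ (x : X) (r : ℝ), 0 < r → μ (ball x (2*r)) ≤ ENNReal.ofReal D * μ (ball x r)

/-- All balls have positive finite measure. -/
def BallsPosFinite (μ : Measure X) : Prop :=
  ∀ (x : X) (r : ℝ), 0 < r → 0 < μ (ball x r) ∧ μ (ball x r) < ⊤

/-- The pointwise `p`-Hardy inequality for the open set `Ω`, with constants `C_H`, `κ`. -/
def PointwiseHardy (μ : Measure X) (p : ℝ) (Ω : Set X) (C_H κ : ℝ) : Prop :=
  ∀ u g : X → ℝ, (∃ L, LipschitzWith L u) → (∀ y ∉ Ω, u y = 0) →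
    Measurable g → (∀ y, 0 ≤ g y) → (∃ M, ∀ y, g y ≤ M) → IsUpperGradient g u →
    ∀ x ∈ Ω, |u x| ≤ C_H * infDist x Ωᶜ * restrMax μ p (κ * infDist x Ωᶜ) g x

/-- The `p`-Poincaré inequality on `X` with constants `C`, `lam`. -/
def Poincare (μ : Measure X) (p C lam : ℝ) : Prop :=
  ∀ (x₀ : X) (r : ℝ), 0 < r → ∀ u g : X → ℝ,
    (∃ L, LipschitzWith L u) → Measurable g → (∀ y, 0 ≤ g y) → (∃ M, ∀ y, g y ≤ M) →
    IsUpperGradient g u →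
    ⨍ y in ball x₀ r, |u y - ⨍ z in ball x₀ r, u z ∂μ| ∂μ ≤
      C * r * (⨍ y in ball x₀ (lam * r), (g y) ^ p ∂μ) ^ (1/p)

/-- `inf_{γ ∈ Γ(X)^ν_{x,E}} ∫_γ g ds` : infimum of curve integrals over curves
connecting `x` to `E` of length at most `ν d(x,E)`. -/
noncomputable def curveInfSet (g : X → ℝ) (x : X) (E : Set X) (ν : ℝ) : ℝ :=
  sInf { I | ∃ γ : Curve X, γ.ConnectsSet x E ∧ γ.len ≤ ν * infDist x E ∧ I = γ.integral g }

/-- `inf_{γ ∈ Γ(X)^ν_{x,y}} ∫_γ g ds` : infimum of curve integrals over curves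
connecting `x` to `y` of length at most `ν d(x,y)`. -/
noncomputable def curveInfPt (g : X → ℝ) (x y : X) (ν : ℝ) : ℝ :=
  sInf { I | ∃ γ : Curve X, γ.Connects x y ∧ γ.len ≤ ν * dist x y ∧ I = γ.integral g }

/-- The function `α_{p,Ω}(ν,κ,τ)`. -/
noncomputable def alphaFn (μ : Measure X) (p : ℝ) (Ω : Set X) (ν κ τ : ℝ) : ℝ :=
  sSup { v | ∃ x ∈ Ω, ∃ g : X → ℝ, LowerSemicontinuous g ∧ (∀ y, g y ∈ Icc (0:ℝ) 1) ∧
    restrMax μ p (κ * infDist x Ωᶜ) g x ≤ τ ∧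
    v = curveInfSet g x Ωᶜ ν / infDist x Ωᶜ }

end Defs


set_option linter.unusedSectionVars false

section PartA

variable {X : Type*} [MetricSpace X]

namespace Curve

theorem zero_mem (γ : Curve X) : (0:ℝ) ∈ Icc (0:ℝ) γ.len := ⟨le_refl _, γ.len_pos.le⟩

theorem len_mem (γ : Curve X) : γ.len ∈ Icc (0:ℝ) γ.len := ⟨γ.len_pos.le, le_refl _⟩

theorem dist_le {γ : Curve X} {s t : ℝ} (hs : s ∈ Icc 0 γ.len) (ht : t ∈ Icc 0 γ.len) :
    dist (γ.toFun s) (γ.toFun t) ≤ |s - t| := by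
  have := γ.lip.dist_le_mul s hs t ht
  simpa [Real.dist_eq] using this

theorem dist_endpoints_le (γ : Curve X) : dist (γ.toFun 0) (γ.toFun γ.len) ≤ γ.len := by
  have := dist_le γ.zero_mem γ.len_mem
  rw [abs_of_nonpos (by linarith [γ.len_pos] : (0:ℝ) - γ.len ≤ 0)] at this
  simpa using this

theorem continuousOn (γ : Curve X) : ContinuousOn γ.toFun (Icc 0 γ.len) :=
  γ.lip.continuousOn

variable [MeasurableSpace X] [BorelSpace X]

theorem aemeasurable_comp (γ : Curve X) {g : X → ℝ} (hg : Measurable g) {s : Set ℝ}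
    (hs : MeasurableSet s) (hsub : s ⊆ Icc 0 γ.len) :
    AEMeasurable (fun t => g (γ.toFun t)) (volume.restrict s) := by
  have h1 : AEMeasurable γ.toFun (volume.restrict s) :=
    (γ.continuousOn.mono hsub).aemeasurable hs
  exact hg.comp_aemeasurable h1

theorem integrableOn_comp (γ : Curve X) {g : X → ℝ} (hg : Measurable g) {M : ℝ}
    (hM : ∀ y, |g y| ≤ M) {s : Set ℝ} (hs : MeasurableSet s) (hsub : s ⊆ Icc 0 γ.len) :
    IntegrableOn (fun t => g (γ.toFun t)) s := by
  have hμ : volume s < ⊤ :=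
    lt_of_le_of_lt (measure_mono hsub) (by rw [Real.volume_Icc]; exact ENNReal.ofReal_lt_top)
  refine Integrable.mono' (g := fun _ => M) (integrableOn_const hμ.ne)
    ((γ.aemeasurable_comp hg hs hsub).aestronglyMeasurable) ?_
  exact Filter.Eventually.of_forall fun t => hM _

theorem integral_nonneg (γ : Curve X) {g : X → ℝ} (hg : ∀ y, 0 ≤ g y) : 0 ≤ γ.integral g :=
  setIntegral_nonneg measurableSet_Icc fun _ _ => hg _

theorem integral_le (γ : Curve X) {g : X → ℝ} (hg : Measurable g) {M : ℝ}
    (h0 : ∀ y, 0 ≤ g y) (hM : ∀ y, g y ≤ M) : γ.integral g ≤ M * γ.len := by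
  have habs : ∀ y, |g y| ≤ M := fun y => by
    rw [abs_of_nonneg (h0 y)]; exact hM y
  have h1 : γ.integral g ≤ ∫ t in Icc (0:ℝ) γ.len, M := by
    refine setIntegral_mono_on (γ.integrableOn_comp hg habs measurableSet_Icc le_rfl)
      (integrableOn_const (by rw [Real.volume_Icc]; exact ENNReal.ofReal_ne_top))
      measurableSet_Icc fun t _ => hM _
  calc γ.integral g ≤ _ := h1
    _ = M * γ.len := by
      rw [setIntegral_const, measureReal_def, Real.volume_Icc, smul_eq_mul, sub_zero,
        ENNReal.toReal_ofReal γ.len_pos.le, mul_comm]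

theorem integral_mono (γ : Curve X) {g₁ g₂ : X → ℝ} (h1 : Measurable g₁) (h2 : Measurable g₂)
    {M : ℝ} (hb1 : ∀ y, |g₁ y| ≤ M) (hb2 : ∀ y, |g₂ y| ≤ M)
    (hle : ∀ t ∈ Icc (0:ℝ) γ.len, g₁ (γ.toFun t) ≤ g₂ (γ.toFun t)) :
    γ.integral g₁ ≤ γ.integral g₂ :=
  setIntegral_mono_on (γ.integrableOn_comp h1 hb1 measurableSet_Icc le_rfl)
    (γ.integrableOn_comp h2 hb2 measurableSet_Icc le_rfl) measurableSet_Icc hle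

theorem integral_add_const (γ : Curve X) {g : X → ℝ} (hg : Measurable g) {M : ℝ}
    (hM : ∀ y, |g y| ≤ M) (c : ℝ) :
    γ.integral (fun y => g y + c) = γ.integral g + c * γ.len := by
  unfold Curve.integral
  rw [MeasureTheory.integral_add (γ.integrableOn_comp hg hM measurableSet_Icc le_rfl)
    (integrableOn_const (by rw [Real.volume_Icc]; exact ENNReal.ofReal_ne_top))]
  rw [setIntegral_const, measureReal_def, Real.volume_Icc, smul_eq_mul, sub_zero,
    ENNReal.toReal_ofReal γ.len_pos.le, mul_comm]

/-- Concatenation of two curves. -/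
noncomputable def concat (γ σ : Curve X) (hmatch : σ.toFun 0 = γ.toFun γ.len) : Curve X where
  len := γ.len + σ.len
  len_pos := add_pos γ.len_pos σ.len_pos
  toFun := fun t => if t ≤ γ.len then γ.toFun t else σ.toFun (t - γ.len)
  lip := by
    apply LipschitzOnWith.of_dist_le_mul
    have key : ∀ s ∈ Icc (0:ℝ) (γ.len + σ.len), ∀ t ∈ Icc (0:ℝ) (γ.len + σ.len), s ≤ t →
        dist ((fun t => if t ≤ γ.len then γ.toFun t else σ.toFun (t - γ.len)) s)
          ((fun t => if t ≤ γ.len then γ.toFun t else σ.toFun (t - γ.len)) t) ≤ t - s := by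
      intro s hs t ht hst
      by_cases ht1 : t ≤ γ.len
      · have hs1 : s ≤ γ.len := le_trans hst ht1
        simp only [if_pos ht1, if_pos hs1]
        have := Curve.dist_le (γ := γ) ⟨hs.1, hs1⟩ ⟨le_trans hs.1 hst, ht1⟩
        rwa [abs_of_nonpos (by linarith), neg_sub] at this
      · push_neg at ht1
        have htm : t - γ.len ∈ Icc (0:ℝ) σ.len := ⟨by linarith, by linarith [ht.2]⟩
        by_cases hs1 : s ≤ γ.len
        · simp only [if_pos hs1, if_neg (not_le.2 ht1)]
          have h1 := Curve.dist_le (γ := γ) ⟨hs.1, hs1⟩ γ.len_mem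
          rw [abs_of_nonpos (by linarith), neg_sub] at h1
          have h2 := Curve.dist_le (γ := σ) σ.zero_mem htm
          rw [abs_of_nonpos (by linarith [htm.1]), neg_sub, sub_zero, hmatch] at h2
          calc dist (γ.toFun s) (σ.toFun (t - γ.len))
              ≤ dist (γ.toFun s) (γ.toFun γ.len) + dist (γ.toFun γ.len) (σ.toFun (t - γ.len)) :=
                dist_triangle _ _ _
            _ ≤ (γ.len - s) + (t - γ.len) := add_le_add h1 h2
            _ = t - s := by ring
        · push_neg at hs1
          simp only [if_neg (not_le.2 ht1), if_neg (not_le.2 hs1)]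
          have hsm : s - γ.len ∈ Icc (0:ℝ) σ.len := ⟨by linarith, by linarith [hs.2]⟩
          have := Curve.dist_le (γ := σ) hsm htm
          rwa [abs_of_nonpos (by linarith), neg_sub, sub_sub_sub_cancel_right] at this
    intro s hs t ht
    rcases le_total s t with h | h
    · have := key s hs t ht h
      rw [Real.dist_eq, abs_of_nonpos (by linarith), neg_sub]
      simpa using this
    · have := key t ht s hs h
      rw [Real.dist_eq, abs_of_nonneg (by linarith), dist_comm]
      simpa using this

theorem concat_start (γ σ : Curve X) (h : σ.toFun 0 = γ.toFun γ.len) :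
    (γ.concat σ h).toFun 0 = γ.toFun 0 := by
  simp only [concat, if_pos γ.len_pos.le]

theorem concat_end (γ σ : Curve X) (h : σ.toFun 0 = γ.toFun γ.len) :
    (γ.concat σ h).toFun (γ.concat σ h).len = σ.toFun σ.len := by
  have h1 : ¬ (γ.len + σ.len ≤ γ.len) := by linarith [σ.len_pos]
  simp only [concat, if_neg h1, add_sub_cancel_left]

theorem concat_integral (γ σ : Curve X) (h : σ.toFun 0 = γ.toFun γ.len) {g : X → ℝ}
    (hg : Measurable g) {M : ℝ} (hM : ∀ y, |g y| ≤ M) :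
    (γ.concat σ h).integral g = γ.integral g + σ.integral g := by
  have hsplit : Icc (0:ℝ) (γ.len + σ.len) = Icc 0 γ.len ∪ Ioc γ.len (γ.len + σ.len) :=
    (Set.Icc_union_Ioc_eq_Icc γ.len_pos.le (by linarith [σ.len_pos])).symm
  have hdisj : Disjoint (Icc (0:ℝ) γ.len) (Ioc γ.len (γ.len + σ.len)) := by
    apply Set.disjoint_left.2
    rintro a ⟨_, h2⟩ ⟨h3, _⟩
    exact absurd h3 (not_lt.2 h2)
  have hlen : (γ.concat σ h).len = γ.len + σ.len := rfl
  have hsub1 : Icc (0:ℝ) γ.len ⊆ Icc 0 (γ.concat σ h).len := by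
    rw [hlen]; exact Set.Icc_subset_Icc le_rfl (by linarith [σ.len_pos])
  have hsub2 : Ioc γ.len (γ.len + σ.len) ⊆ Icc 0 (γ.concat σ h).len := by
    rw [hlen]; intro a ha; exact ⟨le_trans γ.len_pos.le ha.1.le, ha.2⟩
  have hint1 := (γ.concat σ h).integrableOn_comp hg hM measurableSet_Icc hsub1
  have hint2 := (γ.concat σ h).integrableOn_comp hg hM measurableSet_Ioc hsub2
  unfold Curve.integral
  rw [hlen, hsplit, setIntegral_union hdisj measurableSet_Ioc hint1 hint2]
  congr 1
  · refine setIntegral_congr_fun measurableSet_Icc fun t htm => ?_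
    simp only [concat, if_pos htm.2]
  · have e1 : ∫ t in Ioc γ.len (γ.len + σ.len), g ((γ.concat σ h).toFun t)
        = ∫ t in Ioc γ.len (γ.len + σ.len), g (σ.toFun (t - γ.len)) := by
      refine setIntegral_congr_fun measurableSet_Ioc fun t htm => ?_
      simp only [concat, if_neg (not_le.2 htm.1)]
    rw [e1]
    rw [← intervalIntegral.integral_of_le (by linarith [σ.len_pos] : γ.len ≤ γ.len + σ.len)]
    have := intervalIntegral.integral_comp_sub_right (a := γ.len) (b := γ.len + σ.len)
      (fun x => g (σ.toFun x)) γ.len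
    rw [this, sub_self, add_sub_cancel_left,
      intervalIntegral.integral_of_le σ.len_pos.le, integral_Icc_eq_integral_Ioc]

/-- Reversal of a curve. -/
noncomputable def reverse (γ : Curve X) : Curve X where
  len := γ.len
  len_pos := γ.len_pos
  toFun := fun t => γ.toFun (γ.len - t)
  lip := by
    apply LipschitzOnWith.of_dist_le_mul
    intro s hs t ht
    have h1 : γ.len - s ∈ Icc (0:ℝ) γ.len := ⟨by linarith [hs.2], by linarith [hs.1]⟩
    have h2 : γ.len - t ∈ Icc (0:ℝ) γ.len := ⟨by linarith [ht.2], by linarith [ht.1]⟩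
    have := Curve.dist_le (γ := γ) h1 h2
    calc dist (γ.toFun (γ.len - s)) (γ.toFun (γ.len - t)) ≤ |γ.len - s - (γ.len - t)| := this
      _ = |s - t| := by rw [abs_sub_comm]; ring_nf
      _ = ↑(1:NNReal) * dist s t := by rw [Real.dist_eq]; simp

theorem reverse_start (γ : Curve X) : γ.reverse.toFun 0 = γ.toFun γ.len := by
  simp only [reverse, sub_zero]

theorem reverse_end (γ : Curve X) : γ.reverse.toFun γ.reverse.len = γ.toFun 0 := by
  simp only [reverse, sub_self]

theorem reverse_integral (γ : Curve X) (g : X → ℝ) :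
    γ.reverse.integral g = γ.integral g := by
  unfold Curve.integral
  have hlen : γ.reverse.len = γ.len := rfl
  rw [hlen]
  have e1 : ∫ t in Icc (0:ℝ) γ.len, g (γ.reverse.toFun t)
      = ∫ t in Icc (0:ℝ) γ.len, g (γ.toFun (γ.len - t)) := rfl
  rw [e1, integral_Icc_eq_integral_Ioc, ← intervalIntegral.integral_of_le γ.len_pos.le]
  have := intervalIntegral.integral_comp_sub_left (a := (0:ℝ)) (b := γ.len)
    (fun x => g (γ.toFun x)) γ.len
  rw [this, sub_self, sub_zero, intervalIntegral.integral_of_le γ.len_pos.le,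
    integral_Icc_eq_integral_Ioc]

/-- Portion of a curve on `[a,b] ⊆ [0,len]`. -/
noncomputable def portion (γ : Curve X) {a b : ℝ} (h0 : 0 ≤ a) (hab : a < b) (hb : b ≤ γ.len) :
    Curve X where
  len := b - a
  len_pos := sub_pos.2 hab
  toFun := fun t => γ.toFun (t + a)
  lip := by
    apply LipschitzOnWith.of_dist_le_mul
    intro s hs t ht
    have h1 : s + a ∈ Icc (0:ℝ) γ.len := ⟨by linarith [hs.1], by linarith [hs.2]⟩
    have h2 : t + a ∈ Icc (0:ℝ) γ.len := ⟨by linarith [ht.1], by linarith [ht.2]⟩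
    have := Curve.dist_le (γ := γ) h1 h2
    calc dist (γ.toFun (s + a)) (γ.toFun (t + a)) ≤ |s + a - (t + a)| := this
      _ = ↑(1:NNReal) * dist s t := by rw [Real.dist_eq]; ring_nf; simp

theorem portion_start (γ : Curve X) {a b : ℝ} (h0 : 0 ≤ a) (hab : a < b) (hb : b ≤ γ.len) :
    (γ.portion h0 hab hb).toFun 0 = γ.toFun a := by
  simp only [portion, zero_add]

theorem portion_end (γ : Curve X) {a b : ℝ} (h0 : 0 ≤ a) (hab : a < b) (hb : b ≤ γ.len) :
    (γ.portion h0 hab hb).toFun (γ.portion h0 hab hb).len = γ.toFun b := by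
  simp only [portion, sub_add_cancel]

theorem portion_integral (γ : Curve X) {a b : ℝ} (h0 : 0 ≤ a) (hab : a < b) (hb : b ≤ γ.len)
    (g : X → ℝ) :
    (γ.portion h0 hab hb).integral g = ∫ t in Icc a b, g (γ.toFun t) := by
  unfold Curve.integral
  have hlen : (γ.portion h0 hab hb).len = b - a := rfl
  have e1 : ∫ t in Icc (0:ℝ) (b-a), g ((γ.portion h0 hab hb).toFun t)
      = ∫ t in Icc (0:ℝ) (b-a), g (γ.toFun (t + a)) := rfl
  rw [hlen, e1, integral_Icc_eq_integral_Ioc,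
    ← intervalIntegral.integral_of_le (by linarith : (0:ℝ) ≤ b - a)]
  have := intervalIntegral.integral_comp_add_right (a := (0:ℝ)) (b := b - a)
    (fun x => g (γ.toFun x)) a
  rw [this, zero_add, sub_add_cancel, intervalIntegral.integral_of_le (by linarith : a ≤ b),
    integral_Icc_eq_integral_Ioc]

end Curve

end PartA

section PartB
variable {X : Type*} [MetricSpace X] [MeasurableSpace X] [BorelSpace X]
variable {μ : Measure X} {p : ℝ} {f : X → ℝ} {x : X} {r : ℝ}

theorem restrMax_of_pos (hr : 0 < r) (μ : Measure X) (p : ℝ) (f : X → ℝ) (x : X) :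
    restrMax μ p r f x = sSup { m | ∃ y t, x ∈ ball y t ∧ 0 < t ∧ t < r ∧
      m = (⨍ z in ball y t, |f z| ^ p ∂μ) ^ (1/p) } := if_neg hr.ne'

theorem integrableOn_abs_rpow (hf : Measurable f) {M : ℝ} (hM : ∀ y, |f y| ≤ M)
    (hp : 0 < p) {s : Set X} (hs : μ s < ⊤) :
    IntegrableOn (fun z => |f z| ^ p) s μ := by
  refine Integrable.mono' (g := fun _ => M ^ p) (integrableOn_const hs.ne)
    ((hf.abs.pow_const p).aestronglyMeasurable) ?_
  refine Filter.Eventually.of_forall fun z => ?_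
  rw [Real.norm_eq_abs, abs_of_nonneg (Real.rpow_nonneg (abs_nonneg _) _)]
  exact Real.rpow_le_rpow (abs_nonneg _) (hM z) hp.le

/-- The average of `|f|^p` over a ball is at most `M^p`. -/
theorem setAverage_abs_rpow_le (hf : Measurable f) {M : ℝ} (hM : ∀ y, |f y| ≤ M)
    (hp : 0 < p) {y : X} {t : ℝ} (h0 : 0 < μ (ball y t)) (hfin : μ (ball y t) < ⊤) :
    (⨍ z in ball y t, |f z| ^ p ∂μ) ≤ M ^ p := by
  rw [setAverage_eq]
  have htr : 0 < (μ (ball y t)).toReal := ENNReal.toReal_pos h0.ne' hfin.ne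
  have h1 : ∫ z in ball y t, |f z| ^ p ∂μ ≤ M ^ p * (μ (ball y t)).toReal := by
    have := setIntegral_mono_on (integrableOn_abs_rpow hf hM hp hfin)
      (integrableOn_const hfin.ne) measurableSet_ball
      (fun z _ => Real.rpow_le_rpow (abs_nonneg _) (hM z) hp.le)
    rw [setIntegral_const, measureReal_def, smul_eq_mul] at this
    linarith [this]
  rw [smul_eq_mul]
  calc (μ (ball y t)).toReal⁻¹ * ∫ z in ball y t, |f z| ^ p ∂μ
      ≤ (μ (ball y t)).toReal⁻¹ * (M ^ p * (μ (ball y t)).toReal) := by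
        apply mul_le_mul_of_nonneg_left h1 (inv_nonneg.2 htr.le)
    _ = M ^ p := by field_simp
  
theorem setAverage_abs_rpow_nonneg {s : Set X} :
    0 ≤ ⨍ z in s, |f z| ^ p ∂μ := by
  rw [setAverage_eq, smul_eq_mul]
  exact mul_nonneg (inv_nonneg.2 ENNReal.toReal_nonneg)
    (integral_nonneg fun z => Real.rpow_nonneg (abs_nonneg _) _)

/-- Each candidate in the maximal-function set is nonnegative. -/
theorem restrMax_nonneg (hr : 0 < r) : 0 ≤ restrMax μ p r f x := by
  rw [restrMax_of_pos hr]
  refine Real.sSup_nonneg fun m hm => ?_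
  obtain ⟨y, t, _, _, _, rfl⟩ := hm
  exact Real.rpow_nonneg setAverage_abs_rpow_nonneg _

theorem restrMax_bddAbove (hf : Measurable f) {M : ℝ} (hM : ∀ y, |f y| ≤ M) (hM0 : 0 ≤ M)
    (hp : 0 < p) (hball : ∀ (y : X) (t : ℝ), 0 < t → 0 < μ (ball y t) ∧ μ (ball y t) < ⊤) :
    BddAbove { m | ∃ y t, x ∈ ball y t ∧ 0 < t ∧ t < r ∧
      m = (⨍ z in ball y t, |f z| ^ p ∂μ) ^ (1/p) } := by
  refine ⟨M, fun m hm => ?_⟩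
  obtain ⟨y, t, _, ht, _, rfl⟩ := hm
  calc (⨍ z in ball y t, |f z| ^ p ∂μ) ^ (1/p)
      ≤ (M ^ p) ^ (1/p) := Real.rpow_le_rpow setAverage_abs_rpow_nonneg
        (setAverage_abs_rpow_le hf hM hp (hball y t ht).1 (hball y t ht).2)
        (by positivity)
    _ = M := by rw [one_div, Real.rpow_rpow_inv hM0 hp.ne']

/-- Any single ball average bounds from below the maximal function. -/
theorem le_restrMax (hf : Measurable f) {M : ℝ} (hM : ∀ y, |f y| ≤ M) (hM0 : 0 ≤ M)
    (hp : 0 < p) (hball : ∀ (y : X) (t : ℝ), 0 < t → 0 < μ (ball y t) ∧ μ (ball y t) < ⊤)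
    {y : X} {t : ℝ} (hx : x ∈ ball y t) (ht : 0 < t) (htr : t < r) :
    (⨍ z in ball y t, |f z| ^ p ∂μ) ^ (1/p) ≤ restrMax μ p r f x := by
  rw [restrMax_of_pos (lt_trans ht htr)]
  exact le_csSup (restrMax_bddAbove hf hM hM0 hp hball) ⟨y, t, hx, ht, htr, rfl⟩

end PartB


section PartC

variable {X : Type*} [MetricSpace X]

theorem one_le_of_isQuasiconvex [Nontrivial X] {C : ℝ} (hQC : IsQuasiconvex X C) : 1 ≤ C := by
  obtain ⟨a, b, hab⟩ := exists_pair_ne X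
  obtain ⟨γ, ⟨h0, h1⟩, hlen⟩ := hQC a b hab
  have hd : 0 < dist a b := dist_pos.2 hab
  have h2 : dist a b ≤ γ.len := by
    have := γ.dist_endpoints_le
    rwa [h0, h1] at this
  have : 1 * dist a b ≤ C * dist a b := by
    rw [one_mul]; exact le_trans h2 hlen
  exact le_of_mul_le_mul_right this hd

theorem real_add_rpow_le {x y q : ℝ} (hx : 0 ≤ x) (hy : 0 ≤ y) (hq0 : 0 < q) (hq1 : q ≤ 1) :
    (x + y) ^ q ≤ x ^ q + y ^ q := by
  have h := NNReal.rpow_add_le_add_rpow x.toNNReal y.toNNReal hq0.le hq1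
  have h2 := NNReal.coe_le_coe.2 h
  rw [NNReal.coe_add, NNReal.coe_rpow, NNReal.coe_rpow, NNReal.coe_rpow, NNReal.coe_add,
    Real.coe_toNNReal x hx, Real.coe_toNNReal y hy] at h2
  exact h2

variable [MeasurableSpace X] [BorelSpace X]

/-- Per-ball comparison of averages for `g + c` versus `g`. -/
theorem ball_average_add_const_le {μ : Measure X} {p : ℝ} (hp : 1 ≤ p) {g : X → ℝ}
    (hg : Measurable g) {M : ℝ} (hg0 : ∀ y, 0 ≤ g y) (hgM : ∀ y, g y ≤ M)
    {c : ℝ} (hc : 0 < c) {y : X} {t : ℝ} (h0 : 0 < μ (ball y t)) (hfin : μ (ball y t) < ⊤) :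
    (⨍ z in ball y t, |g z + c| ^ p ∂μ) ^ (1/p)
      ≤ 2 * (⨍ z in ball y t, |g z| ^ p ∂μ) ^ (1/p) + 2 * c := by
  have hp0 : 0 < p := lt_of_lt_of_le one_pos hp
  have hM0 : 0 ≤ M := le_trans (hg0 y) (hgM y)
  have habsg : ∀ z, |g z| ≤ M := fun z => by rw [abs_of_nonneg (hg0 z)]; exact hgM z
  have habsφ : ∀ z, |g z + c| ≤ M + c := fun z => by
    rw [abs_of_nonneg (add_nonneg (hg0 z) hc.le)]
    exact add_le_add (hgM z) le_rfl
  -- pointwise bound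
  have hpt : ∀ z, |g z + c| ^ p ≤ 2 ^ p * (|g z| ^ p + c ^ p) := by
    intro z
    have h1 : |g z + c| ≤ 2 * max (g z) c := by
      rw [abs_of_nonneg (add_nonneg (hg0 z) hc.le), two_mul]
      exact add_le_add (le_max_left _ _) (le_max_right _ _)
    have hmax0 : (0:ℝ) ≤ max (g z) c := le_trans hc.le (le_max_right _ _)
    calc |g z + c| ^ p ≤ (2 * max (g z) c) ^ p :=
          Real.rpow_le_rpow (abs_nonneg _) h1 hp0.le
      _ = 2 ^ p * max (g z) c ^ p := Real.mul_rpow (by norm_num) hmax0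
      _ ≤ 2 ^ p * (|g z| ^ p + c ^ p) := by
          refine mul_le_mul_of_nonneg_left ?_ (Real.rpow_nonneg (by norm_num) _)
          rcases max_cases (g z) c with ⟨he, _⟩ | ⟨he, _⟩
          · rw [he, abs_of_nonneg (hg0 z)]
            exact le_add_of_nonneg_right (Real.rpow_nonneg hc.le _)
          · rw [he]
            exact le_add_of_nonneg_left (Real.rpow_nonneg (abs_nonneg _) _)
  -- average bound
  have htr : 0 < (μ (ball y t)).toReal := ENNReal.toReal_pos h0.ne' hfin.ne
  have hint1 : IntegrableOn (fun z => |g z + c| ^ p) (ball y t) μ :=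
    integrableOn_abs_rpow (hg.add_const c) habsφ hp0 hfin
  have hint2 : IntegrableOn (fun z => |g z| ^ p) (ball y t) μ :=
    integrableOn_abs_rpow hg habsg hp0 hfin
  have hint3 : IntegrableOn (fun z => 2 ^ p * (|g z| ^ p + c ^ p)) (ball y t) μ := by
    exact ((hint2.add (integrableOn_const hfin.ne)).const_mul _)
  have havg : (⨍ z in ball y t, |g z + c| ^ p ∂μ)
      ≤ 2 ^ p * (⨍ z in ball y t, |g z| ^ p ∂μ) + 2 ^ p * c ^ p := by
    rw [setAverage_eq, setAverage_eq, smul_eq_mul, smul_eq_mul]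
    have hI : ∫ z in ball y t, |g z + c| ^ p ∂μ
        ≤ ∫ z in ball y t, 2 ^ p * (|g z| ^ p + c ^ p) ∂μ :=
      setIntegral_mono_on hint1 hint3 measurableSet_ball fun z _ => hpt z
    have hI2 : ∫ z in ball y t, 2 ^ p * (|g z| ^ p + c ^ p) ∂μ
        = 2 ^ p * (∫ z in ball y t, |g z| ^ p ∂μ) + 2 ^ p * c ^ p * (μ (ball y t)).toReal := by
      rw [MeasureTheory.integral_const_mul,
        MeasureTheory.integral_add hint2 (integrableOn_const hfin.ne),
        setIntegral_const, measureReal_def, smul_eq_mul]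
      ring
    calc (μ (ball y t)).toReal⁻¹ * ∫ z in ball y t, |g z + c| ^ p ∂μ
        ≤ (μ (ball y t)).toReal⁻¹ *
          (2 ^ p * (∫ z in ball y t, |g z| ^ p ∂μ) + 2 ^ p * c ^ p * (μ (ball y t)).toReal) := by
          refine mul_le_mul_of_nonneg_left ?_ (inv_nonneg.2 htr.le)
          rw [← hI2]; exact hI
      _ = 2 ^ p * ((μ (ball y t)).toReal⁻¹ * ∫ z in ball y t, |g z| ^ p ∂μ) + 2 ^ p * c ^ p := by
          field_simp
  -- rpow step
  have ha : (0:ℝ) ≤ ⨍ z in ball y t, |g z| ^ p ∂μ := setAverage_abs_rpow_nonneg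
  have hb : (0:ℝ) ≤ ⨍ z in ball y t, |g z + c| ^ p ∂μ := setAverage_abs_rpow_nonneg
  have h2p : (0:ℝ) ≤ 2 ^ p * (⨍ z in ball y t, |g z| ^ p ∂μ) :=
    mul_nonneg (Real.rpow_nonneg (by norm_num) _) ha
  have hq1 : 1/p ≤ 1 := by
    rw [div_le_one hp0]; exact hp
  calc (⨍ z in ball y t, |g z + c| ^ p ∂μ) ^ (1/p)
      ≤ (2 ^ p * (⨍ z in ball y t, |g z| ^ p ∂μ) + 2 ^ p * c ^ p) ^ (1/p) :=
        Real.rpow_le_rpow hb havg (by positivity)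
    _ ≤ (2 ^ p * (⨍ z in ball y t, |g z| ^ p ∂μ)) ^ (1/p) + (2 ^ p * c ^ p) ^ (1/p) :=
        real_add_rpow_le h2p (by positivity) (by positivity) hq1
    _ = 2 * (⨍ z in ball y t, |g z| ^ p ∂μ) ^ (1/p) + 2 * c := by
        rw [Real.mul_rpow (Real.rpow_nonneg (by norm_num) _) ha,
          Real.mul_rpow (Real.rpow_nonneg (by norm_num) _) (by positivity),
          one_div, Real.rpow_rpow_inv (by norm_num) hp0.ne',
          Real.rpow_rpow_inv hc.le hp0.ne']

end PartC


section PartD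

variable {X : Type*} [MetricSpace X] [MeasurableSpace X] [BorelSpace X]

theorem hardy_imp_curve [Nontrivial X] (μ : Measure X) {C_QC : ℝ} (hQC : IsQuasiconvex X C_QC)
    (hball : BallsPosFinite μ) {p : ℝ} (hp : 1 ≤ p)
    {Ω : Set X} (hΩo : IsOpen Ω) (hΩprop : Ω ≠ univ)
    {C_H κ : ℝ} (hCH : 0 < C_H) (hκ : 1 ≤ κ) (hH : PointwiseHardy μ p Ω C_H κ)
    (g : X → ℝ) (hlsc : LowerSemicontinuous g) (hg0 : ∀ y, 0 ≤ g y) (hgM : ∃ M, ∀ y, g y ≤ M)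
    (x : X) (hx : x ∈ Ω) :
    curveInfSet g x Ωᶜ (|C_QC| + 4*C_H + 2) ≤
      (4*C_H + 1) * infDist x Ωᶜ * restrMax μ p (κ * infDist x Ωᶜ) g x := by
  classical
  obtain ⟨M, hM⟩ := hgM
  set M₀ : ℝ := max M 0 with hM₀def
  have hgM₀ : ∀ y, g y ≤ M₀ := fun y => le_trans (hM y) (le_max_left _ _)
  have hM₀0 : (0:ℝ) ≤ M₀ := le_max_right _ _
  have habsg : ∀ y, |g y| ≤ M₀ := fun y => by
    rw [abs_of_nonneg (hg0 y)]; exact hgM₀ y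
  have hgmeas : Measurable g := hlsc.measurable
  have hp0 : 0 < p := lt_of_lt_of_le one_pos hp
  have hΩcne : Ωᶜ.Nonempty := Set.nonempty_compl.2 hΩprop
  have hxc : x ∉ Ωᶜ := fun h => h hx
  set d : ℝ := infDist x Ωᶜ with hddef
  have hd : 0 < d := (hΩo.isClosed_compl.notMem_iff_infDist_pos hΩcne).1 hxc
  have hκd : 0 < κ * d := mul_pos (lt_of_lt_of_le one_pos hκ) hd
  have hC1 : 1 ≤ C_QC := one_le_of_isQuasiconvex hQC
  set δ : ℝ := restrMax μ p (κ * d) g x with hδdef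
  have hδ0 : 0 ≤ δ := restrMax_nonneg hκd
  set ν : ℝ := |C_QC| + 4*C_H + 2 with hνdef
  -- the main estimate, with a positive margin θ
  have main : ∀ θ : ℝ, 0 < θ → curveInfSet g x Ωᶜ ν ≤ (4*C_H+1) * d * δ + ((4*C_H+1)*d) * θ := by
    intro θ hθ
    set c : ℝ := δ + θ with hcdef
    have hc : 0 < c := by positivity
    set φ : X → ℝ := fun z => g z + c with hφdef
    have φmeas : Measurable φ := hgmeas.add_const c
    have hφ0 : ∀ y, 0 ≤ φ y := fun y => add_nonneg (hg0 y) hc.le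
    have hφM : ∀ y, φ y ≤ M₀ + c := fun y => add_le_add (hgM₀ y) le_rfl
    have habsφ : ∀ y, |φ y| ≤ M₀ + c := fun y => by
      rw [abs_of_nonneg (hφ0 y)]; exact hφM y
    set S : X → Set ℝ :=
      fun y => {I | ∃ γ : Curve X, γ.ConnectsSet y Ωᶜ ∧ I = γ.integral φ} with hSdef
    have hSne : ∀ y, (S y).Nonempty := by
      intro y
      by_cases hy : ∃ z ∈ Ωᶜ, z ≠ y
      · obtain ⟨z, hz, hzy⟩ := hy
        obtain ⟨γ, ⟨h0, h1⟩, _⟩ := hQC y z (Ne.symm hzy)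
        exact ⟨γ.integral φ, γ, ⟨h0, by rw [h1]; exact hz⟩, rfl⟩
      · push_neg at hy
        obtain ⟨z0, hz0⟩ := hΩcne
        have hyΩc : y ∈ Ωᶜ := by
          have := hy z0 hz0
          rwa [this] at hz0
        obtain ⟨w, hw⟩ := exists_ne y
        obtain ⟨σ, ⟨h0, h1⟩, _⟩ := hQC y w (Ne.symm hw)
        refine ⟨(σ.concat σ.reverse σ.reverse_start).integral φ,
          σ.concat σ.reverse σ.reverse_start, ⟨?_, ?_⟩, rfl⟩
        · rw [Curve.concat_start]; exact h0
        · rw [Curve.concat_end, Curve.reverse_end, h0]; exact hyΩc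
    have hSbdd : ∀ y, BddBelow (S y) := by
      intro y
      refine ⟨0, fun I hI => ?_⟩
      obtain ⟨γ, _, rfl⟩ := hI
      exact γ.integral_nonneg hφ0
    set W : X → ℝ := fun y => sInf (S y) with hWdef
    have hW0 : ∀ y, 0 ≤ W y := by
      intro y
      refine le_csInf (hSne y) fun I hI => ?_
      obtain ⟨γ, _, rfl⟩ := hI
      exact γ.integral_nonneg hφ0
    set u : X → ℝ := fun y => if y ∈ Ω then W y else 0 with hudef
    have hu0 : ∀ y, 0 ≤ u y := by
      intro y
      simp only [hudef]
      by_cases hy : y ∈ Ω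
      · rw [if_pos hy]; exact hW0 y
      · rw [if_neg hy]
    have key : ∀ γ : Curve X, u (γ.toFun 0) ≤ γ.integral φ + u (γ.toFun γ.len) := by
      intro γ
      by_cases hb : γ.toFun γ.len ∈ Ω
      · by_cases ha : γ.toFun 0 ∈ Ω
        · simp only [hudef]
          simp only [if_pos ha, if_pos hb]
          rw [← sub_le_iff_le_add']
          refine le_csInf (hSne _) ?_
          rintro I ⟨σ, hσ, rfl⟩
          have hm : σ.toFun 0 = γ.toFun γ.len := hσ.1
          have hmem : (γ.concat σ hm).integral φ ∈ S (γ.toFun 0) :=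
            ⟨γ.concat σ hm, ⟨by rw [Curve.concat_start], by rw [Curve.concat_end]; exact hσ.2⟩, rfl⟩
          have h1 := csInf_le (hSbdd _) hmem
          rw [Curve.concat_integral _ _ _ φmeas habsφ] at h1
          have hWa : W (γ.toFun 0) = sInf (S (γ.toFun 0)) := rfl
          rw [hWa]
          have h2 := csInf_le (hSbdd (γ.toFun 0)) hmem
          linarith [csInf_le (hSbdd (γ.toFun 0)) hmem, h1]
        · simp only [hudef]
          simp only [if_neg ha]
          have h2 : 0 ≤ (if γ.toFun γ.len ∈ Ω then W (γ.toFun γ.len) else 0) := by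
            rw [if_pos hb]; exact hW0 _
          linarith [γ.integral_nonneg hφ0]
      · simp only [hudef]
        simp only [if_neg hb]
        by_cases ha : γ.toFun 0 ∈ Ω
        · simp only [if_pos ha]
          have hmem : γ.integral φ ∈ S (γ.toFun 0) := ⟨γ, ⟨rfl, hb⟩, rfl⟩
          have h1 := csInf_le (hSbdd _) hmem
          linarith
        · simp only [if_neg ha]
          linarith [γ.integral_nonneg hφ0]
    have hug : IsUpperGradient φ u := by
      intro γ
      rw [abs_sub_le_iff]
      constructor
      · have h1 := key γ
        linarith [hu0 (γ.toFun γ.len)]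
      · have h2 := key γ.reverse
        rw [Curve.reverse_start, Curve.reverse_end, Curve.reverse_integral] at h2
        linarith
    have hLK : (0:ℝ) ≤ (M₀ + c) * C_QC := by positivity
    have hLip : LipschitzWith ((M₀ + c) * C_QC).toNNReal u := by
      apply LipschitzWith.of_dist_le_mul
      intro a b
      rcases eq_or_ne a b with rfl | hab
      · simp
      · obtain ⟨γ, ⟨h0, h1⟩, hlen⟩ := hQC a b hab
        have h2 : |u a - u b| ≤ γ.integral φ := by
          have := hug γ; rwa [h0, h1] at this
        have h3 : γ.integral φ ≤ (M₀ + c) * γ.len := γ.integral_le φmeas hφ0 hφM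
        rw [Real.dist_eq, Real.coe_toNNReal _ hLK]
        calc |u a - u b| ≤ (M₀ + c) * γ.len := le_trans h2 h3
          _ ≤ (M₀ + c) * (C_QC * dist a b) := by
              refine mul_le_mul_of_nonneg_left hlen (by positivity)
          _ = (M₀ + c) * C_QC * dist a b := by ring
    have hvan : ∀ y ∉ Ω, u y = 0 := fun y hy => by simp only [hudef]; exact if_neg hy
    -- apply the Hardy inequality
    have hhardy := hH u φ ⟨_, hLip⟩ hvan φmeas hφ0 ⟨M₀ + c, hφM⟩ hug x hx
    rw [← hddef] at hhardy
    have hux : u x = W x := by simp only [hudef]; exact if_pos hx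
    have hWx1 : W x ≤ C_H * d * restrMax μ p (κ * d) φ x := by
      rw [hux] at hhardy
      exact le_trans (le_abs_self _) hhardy
    -- bound the maximal function of φ
    have hMφ : restrMax μ p (κ * d) φ x ≤ 2 * δ + 2 * c := by
      rw [restrMax_of_pos hκd]
      refine Real.sSup_le ?_ (by positivity)
      rintro m ⟨y, t, hxy, ht, htr, rfl⟩
      have h1 := ball_average_add_const_le (μ := μ) hp hgmeas hg0 hgM₀ hc
        (hball y t ht).1 (hball y t ht).2
      have h2 := le_restrMax (μ := μ) (r := κ * d) (x := x) hgmeas habsg hM₀0 hp0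
        (fun y t ht => hball y t ht) hxy ht htr
      rw [← hδdef] at h2
      calc (⨍ z in ball y t, |φ z| ^ p ∂μ) ^ (1/p)
          = (⨍ z in ball y t, |g z + c| ^ p ∂μ) ^ (1/p) := rfl
        _ ≤ 2 * (⨍ z in ball y t, |g z| ^ p ∂μ) ^ (1/p) + 2 * c := h1
        _ ≤ 2 * δ + 2 * c := by linarith
    have hWx : W x ≤ C_H * d * (2 * δ + 2 * c) :=
      le_trans hWx1 (mul_le_mul_of_nonneg_left hMφ (by positivity))
    -- pick a near-optimal curve
    obtain ⟨I, hIS, hIlt⟩ := Real.lt_sInf_add_pos (hSne x) (mul_pos hc hd)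
    obtain ⟨σ, hσconn, rfl⟩ := hIS
    have hWsx : sInf (S x) = W x := rfl
    rw [hWsx] at hIlt
    have hφint : σ.integral φ = σ.integral g + c * σ.len := σ.integral_add_const hgmeas habsg c
    have hgint0 : 0 ≤ σ.integral g := σ.integral_nonneg hg0
    have hδc : δ ≤ c := by rw [hcdef]; linarith
    have hbound : σ.integral φ < (4*C_H + 1) * c * d := by
      have h1 : C_H * d * (2*δ + 2*c) ≤ C_H * d * (4*c) := by
        refine mul_le_mul_of_nonneg_left (by linarith) (by positivity)
      nlinarith [hIlt, hWx]
    have hσlen : σ.len ≤ ν * d := by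
      have h1 : c * σ.len ≤ σ.integral φ := by rw [hφint]; linarith
      have h2 : c * σ.len < c * ((4*C_H + 1) * d) := by
        calc c * σ.len ≤ σ.integral φ := h1
          _ < (4*C_H + 1) * c * d := hbound
          _ = c * ((4*C_H + 1) * d) := by ring
      have h3 : σ.len < (4*C_H + 1) * d := lt_of_mul_lt_mul_left h2 hc.le
      have h4 : (4*C_H + 1) * d ≤ ν * d := by
        refine mul_le_mul_of_nonneg_right ?_ hd.le
        rw [hνdef]
        have := abs_nonneg C_QC
        linarith
      linarith
    have hmem : σ.integral g ∈
        { I | ∃ γ : Curve X, γ.ConnectsSet x Ωᶜ ∧ γ.len ≤ ν * infDist x Ωᶜ ∧ I = γ.integral g } :=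
      ⟨σ, hσconn, by rw [← hddef]; exact hσlen, rfl⟩
    have hbdd : BddBelow
        { I | ∃ γ : Curve X, γ.ConnectsSet x Ωᶜ ∧ γ.len ≤ ν * infDist x Ωᶜ ∧ I = γ.integral g } := by
      refine ⟨0, fun I hI => ?_⟩
      obtain ⟨γ, _, _, rfl⟩ := hI
      exact γ.integral_nonneg hg0
    have hcis : curveInfSet g x Ωᶜ ν ≤ σ.integral g := csInf_le hbdd hmem
    have hlast : σ.integral g ≤ σ.integral φ := by
      rw [hφint]
      have : 0 ≤ c * σ.len := mul_nonneg hc.le σ.len_pos.le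
      linarith
    calc curveInfSet g x Ωᶜ ν ≤ σ.integral g := hcis
      _ ≤ σ.integral φ := hlast
      _ ≤ (4*C_H + 1) * c * d := hbound.le
      _ = (4*C_H+1) * d * δ + ((4*C_H+1)*d) * θ := by rw [hcdef]; ring
  -- pass to the limit in θ
  refine le_of_forall_pos_le_add fun ε hε => ?_
  have hcoef : 0 < (4*C_H+1) * d := by positivity
  have := main (ε / ((4*C_H+1)*d)) (div_pos hε hcoef)
  calc curveInfSet g x Ωᶜ ν ≤ (4*C_H+1) * d * δ + ((4*C_H+1)*d) * (ε / ((4*C_H+1)*d)) := this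
    _ = (4*C_H+1) * d * δ + ε := by
        rw [mul_div_cancel₀ _ hcoef.ne']

end PartD


section PartE

open ENNReal

variable {X : Type*} [MetricSpace X]

theorem lsc_indicator_ennreal {U : Set X} (hU : IsOpen U) {f : X → ℝ≥0∞}
    (hf : LowerSemicontinuous f) : LowerSemicontinuous (U.indicator f) := by
  rw [lowerSemicontinuous_iff_isOpen_preimage]
  intro c
  have he : (U.indicator f) ⁻¹' Ioi c = U ∩ f ⁻¹' Ioi c := by
    ext z
    simp only [mem_preimage, mem_Ioi, mem_inter_iff, Set.indicator]
    by_cases hz : z ∈ U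
    · simp [hz]
    · simp [hz, ENNReal.not_lt_zero]
  rw [he]
  exact hU.inter ((lowerSemicontinuous_iff_isOpen_preimage.1 hf) c)

theorem lsc_min_const_ennreal {f : X → ℝ≥0∞} (hf : LowerSemicontinuous f) (a : ℝ≥0∞) :
    LowerSemicontinuous (fun z => min (f z) a) := by
  rw [lowerSemicontinuous_iff_isOpen_preimage]
  intro c
  by_cases hca : c < a
  · have he : (fun z => min (f z) a) ⁻¹' Ioi c = f ⁻¹' Ioi c := by
      ext z; simp [lt_min_iff, hca]
    rw [he]
    exact (lowerSemicontinuous_iff_isOpen_preimage.1 hf) c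
  · have he : (fun z => min (f z) a) ⁻¹' Ioi c = ∅ := by
      ext z
      simp only [mem_preimage, mem_Ioi, lt_min_iff, mem_empty_iff_false, iff_false, not_and]
      exact fun _ => hca
    rw [he]
    exact isOpen_empty

theorem lsc_max_ennreal {f g : X → ℝ≥0∞} (hf : LowerSemicontinuous f)
    (hg : LowerSemicontinuous g) : LowerSemicontinuous (fun z => max (f z) (g z)) := by
  rw [lowerSemicontinuous_iff_isOpen_preimage]
  intro c
  have he : (fun z => max (f z) (g z)) ⁻¹' Ioi c = f ⁻¹' Ioi c ∪ g ⁻¹' Ioi c := by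
    ext z; simp [lt_sup_iff]
  rw [he]
  exact ((lowerSemicontinuous_iff_isOpen_preimage.1 hf) c).union
    ((lowerSemicontinuous_iff_isOpen_preimage.1 hg) c)

theorem lsc_toReal {f : X → ℝ≥0∞} (hf : LowerSemicontinuous f) {C : ℝ≥0∞} (hC : C ≠ ⊤)
    (hb : ∀ z, f z ≤ C) : LowerSemicontinuous (fun z => (f z).toReal) := by
  rw [lowerSemicontinuous_iff_isOpen_preimage]
  intro c
  rcases lt_or_ge c 0 with hc | hc
  · have he : (fun z => (f z).toReal) ⁻¹' Ioi c = univ := by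
      ext z
      simp only [mem_preimage, mem_Ioi, mem_univ, iff_true]
      exact lt_of_lt_of_le hc ENNReal.toReal_nonneg
    rw [he]; exact isOpen_univ
  · have he : (fun z => (f z).toReal) ⁻¹' Ioi c = f ⁻¹' Ioi (ENNReal.ofReal c) := by
      ext z
      simp only [mem_preimage, mem_Ioi]
      rw [ENNReal.ofReal_lt_iff_lt_toReal hc (ne_top_of_le_ne_top hC (hb z))]
    rw [he]
    exact (lowerSemicontinuous_iff_isOpen_preimage.1 hf) _

theorem lsc_rpow {f : X → ℝ} (hf : LowerSemicontinuous f) (h0 : ∀ z, 0 ≤ f z) {q : ℝ}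
    (hq : 0 < q) : LowerSemicontinuous (fun z => f z ^ q) := by
  rw [lowerSemicontinuous_iff_isOpen_preimage]
  intro c
  rcases lt_or_ge c 0 with hc | hc
  · have he : (fun z => f z ^ q) ⁻¹' Ioi c = univ := by
      ext z
      simp only [mem_preimage, mem_Ioi, mem_univ, iff_true]
      exact lt_of_lt_of_le hc (Real.rpow_nonneg (h0 z) _)
    rw [he]; exact isOpen_univ
  · have he : (fun z => f z ^ q) ⁻¹' Ioi c = f ⁻¹' Ioi (c ^ q⁻¹) := by
      ext z
      simp only [mem_preimage, mem_Ioi]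
      constructor
      · intro h
        by_contra hno
        push_neg at hno
        have : f z ^ q ≤ (c ^ q⁻¹) ^ q :=
          Real.rpow_le_rpow (h0 z) hno hq.le
        rw [Real.rpow_inv_rpow hc hq.ne'] at this
        exact absurd h (not_lt.2 this)
      · intro h
        by_contra hno
        push_neg at hno
        have h1 : (f z ^ q) ^ q⁻¹ ≤ c ^ q⁻¹ :=
          Real.rpow_le_rpow (Real.rpow_nonneg (h0 z) _) hno (by positivity)
        rw [Real.rpow_rpow_inv (h0 z) hq.ne'] at h1
        exact absurd h (not_lt.2 h1)
    rw [he]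
    exact (lowerSemicontinuous_iff_isOpen_preimage.1 hf) _

theorem lsc_indicator_real {U : Set X} (hU : IsOpen U) {f : X → ℝ}
    (hf : LowerSemicontinuous f) (h0 : ∀ z, 0 ≤ f z) :
    LowerSemicontinuous (U.indicator f) := by
  rw [lowerSemicontinuous_iff_isOpen_preimage]
  intro c
  rcases lt_or_ge c 0 with hc | hc
  · have he : (U.indicator f) ⁻¹' Ioi c = univ := by
      ext z
      simp only [mem_preimage, mem_Ioi, mem_univ, iff_true]
      refine lt_of_lt_of_le hc ?_
      by_cases hz : z ∈ U
      · rw [Set.indicator_of_mem hz]; exact h0 z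
      · rw [Set.indicator_of_notMem hz]
    rw [he]; exact isOpen_univ
  · have he : (U.indicator f) ⁻¹' Ioi c = U ∩ f ⁻¹' Ioi c := by
      ext z
      simp only [mem_preimage, mem_Ioi, mem_inter_iff]
      by_cases hz : z ∈ U
      · rw [Set.indicator_of_mem hz]; simp [hz]
      · rw [Set.indicator_of_notMem hz]
        simp only [hz, false_and, iff_false, not_lt]
        exact hc
    rw [he]
    exact hU.inter ((lowerSemicontinuous_iff_isOpen_preimage.1 hf) c)

variable [MeasurableSpace X] [BorelSpace X]

/-- Doubling comparison: a ball centered at `x` of radius `2t` has measure comparable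
to a ball containing `x` of radius `t`. -/
theorem doubling_ball_le {μ : Measure X} {D : ℝ} (hdoub : IsDoubling μ D)
    {x y : X} {t : ℝ} (hx : x ∈ ball y t) (ht : 0 < t) :
    μ (ball x (2*t)) ≤ ENNReal.ofReal D * (ENNReal.ofReal D * μ (ball y t)) := by
  have hsub : ball x (2*t) ⊆ ball y (2*(2*t)) := by
    intro z hz
    rw [mem_ball] at *
    have hxy : dist x y < t := hx
    calc dist z y ≤ dist z x + dist x y := dist_triangle _ _ _
      _ < 2*t + t := add_lt_add hz hxy
      _ ≤ 2*(2*t) := by linarith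
  calc μ (ball x (2*t)) ≤ μ (ball y (2*(2*t))) := measure_mono hsub
    _ ≤ ENNReal.ofReal D * μ (ball y (2*t)) := hdoub y (2*t) (by linarith)
    _ ≤ ENNReal.ofReal D * (ENNReal.ofReal D * μ (ball y t)) :=
        mul_le_mul_right (hdoub y t ht) _

/-- Truncation lemma: for a curve from `x ∈ Ω` to `Ωᶜ`, and a nonnegative `φ` dominating the
upper gradient `g` on `Ω \ {x}`, the value `|u x|` is bounded by the curve integral of `φ`. -/
theorem abs_le_curve_integral {Ω : Set X} (hΩo : IsOpen Ω) {u g : X → ℝ}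
    (hvan : ∀ y ∉ Ω, u y = 0) (hgmeas : Measurable g) {Mg : ℝ} (habsg : ∀ y, |g y| ≤ Mg)
    (hug : IsUpperGradient g u) {x : X} (hx : x ∈ Ω) {φ : X → ℝ} (hφmeas : Measurable φ)
    {Mφ : ℝ} (habsφ : ∀ y, |φ y| ≤ Mφ) (hφ0 : ∀ y, 0 ≤ φ y)
    (hφge : ∀ z, z ∈ Ω → z ≠ x → g z ≤ φ z)
    (γ : Curve X) (hconn : γ.ConnectsSet x Ωᶜ) : |u x| ≤ γ.integral φ := by
  have hcont := γ.continuousOn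
  set T : Set ℝ := Icc 0 γ.len ∩ γ.toFun ⁻¹' Ωᶜ with hT
  have hTclosed : IsClosed T :=
    hcont.preimage_isClosed_of_isClosed isClosed_Icc hΩo.isClosed_compl
  have hTne : γ.len ∈ T := ⟨γ.len_mem, hconn.2⟩
  have hTbdd : BddBelow T := ⟨0, fun t ht => ht.1.1⟩
  set t₀ := sInf T with ht₀def
  have ht₀T : t₀ ∈ T := hTclosed.csInf_mem ⟨_, hTne⟩ hTbdd
  have ht₀mem : t₀ ∈ Icc 0 γ.len := ht₀T.1
  have hγt₀ : γ.toFun t₀ ∈ Ωᶜ := ht₀T.2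
  have ht₀pos : 0 < t₀ := by
    rcases lt_or_eq_of_le ht₀mem.1 with h | h
    · exact h
    · exfalso
      rw [← h] at hγt₀
      rw [hconn.1] at hγt₀
      exact hγt₀ hx
  have hbefore : ∀ t, 0 ≤ t → t < t₀ → γ.toFun t ∈ Ω := by
    intro t h1 h2
    by_contra hno
    have htT : t ∈ T := ⟨⟨h1, le_trans h2.le ht₀mem.2⟩, hno⟩
    exact absurd (csInf_le hTbdd htT) (not_le.2 h2)
  set T' : Set ℝ := Icc 0 t₀ ∩ γ.toFun ⁻¹' {x} with hT'
  have hT'closed : IsClosed T' :=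
    (hcont.mono (Icc_subset_Icc le_rfl ht₀mem.2)).preimage_isClosed_of_isClosed
      isClosed_Icc isClosed_singleton
  have h0T' : (0:ℝ) ∈ T' := ⟨⟨le_rfl, ht₀pos.le⟩, hconn.1⟩
  have hT'bddAbove : BddAbove T' := ⟨t₀, fun t ht => ht.1.2⟩
  set t₁ := sSup T' with ht₁def
  have ht₁T' : t₁ ∈ T' := hT'closed.csSup_mem ⟨0, h0T'⟩ hT'bddAbove
  have hγt₁ : γ.toFun t₁ = x := ht₁T'.2
  have ht₁0 : 0 ≤ t₁ := ht₁T'.1.1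
  have ht₁t₀ : t₁ < t₀ := by
    rcases lt_or_eq_of_le ht₁T'.1.2 with h | h
    · exact h
    · exfalso
      rw [h] at hγt₁
      rw [hγt₁] at hγt₀
      exact hγt₀ hx
  have hafter : ∀ t, t₁ < t → t < t₀ → γ.toFun t ∈ Ω ∧ γ.toFun t ≠ x := by
    intro t h1 h2
    refine ⟨hbefore t (le_trans ht₁0 h1.le) h2, fun he => ?_⟩
    have htT' : t ∈ T' := ⟨⟨le_trans ht₁0 h1.le, h2.le⟩, he⟩
    exact absurd (le_csSup hT'bddAbove htT') (not_le.2 h1)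
  set σ := γ.portion ht₁0 ht₁t₀ ht₀mem.2 with hσdef
  have hup := hug σ
  rw [hσdef, γ.portion_start, γ.portion_end, hγt₁, hvan _ hγt₀, sub_zero] at hup
  have hσint : σ.integral g = ∫ t in Icc t₁ t₀, g (γ.toFun t) :=
    γ.portion_integral ht₁0 ht₁t₀ ht₀mem.2 g
  have hsubIoo : Ioo t₁ t₀ ⊆ Icc 0 γ.len := fun t ht =>
    ⟨le_trans ht₁0 ht.1.le, le_trans ht.2.le ht₀mem.2⟩
  have hint_g : IntegrableOn (fun t => g (γ.toFun t)) (Ioo t₁ t₀) :=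
    γ.integrableOn_comp hgmeas habsg measurableSet_Ioo hsubIoo
  have hint_φ : IntegrableOn (fun t => φ (γ.toFun t)) (Ioo t₁ t₀) :=
    γ.integrableOn_comp hφmeas habsφ measurableSet_Ioo hsubIoo
  have hmono : ∫ t in Ioo t₁ t₀, g (γ.toFun t) ≤ ∫ t in Ioo t₁ t₀, φ (γ.toFun t) := by
    refine setIntegral_mono_on hint_g hint_φ measurableSet_Ioo fun t ht => ?_
    exact hφge _ (hafter t ht.1 ht.2).1 (hafter t ht.1 ht.2).2
  have hgrow : ∫ t in Ioo t₁ t₀, φ (γ.toFun t) ≤ γ.integral φ := by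
    refine setIntegral_mono_set (γ.integrableOn_comp hφmeas habsφ measurableSet_Icc le_rfl)
      (Filter.Eventually.of_forall fun t => hφ0 _) (HasSubset.Subset.eventuallyLE ?_)
    intro t ht
    exact hsubIoo ht
  calc |u x| ≤ σ.integral g := hup
    _ = ∫ t in Icc t₁ t₀, g (γ.toFun t) := hσint
    _ = ∫ t in Ioo t₁ t₀, g (γ.toFun t) := by
        rw [integral_Icc_eq_integral_Ioc, integral_Ioc_eq_integral_Ioo]
    _ ≤ ∫ t in Ioo t₁ t₀, φ (γ.toFun t) := hmono
    _ ≤ γ.integral φ := hgrow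

end PartE


section PartF

open ENNReal NNReal

variable {X : Type*} [MetricSpace X] [MeasurableSpace X] [BorelSpace X]

theorem exists_lsc_majorant (μ : Measure X) [Measure.WeaklyRegular μ] [SigmaFinite μ]
    {D : ℝ} (hD : 1 < D) (hdoub : IsDoubling μ D) (hball : BallsPosFinite μ)
    {p : ℝ} (hp : 1 ≤ p) {x : X} {R : ℝ} (hR : 0 < R)
    {g₁ : X → ℝ} (hg₁meas : Measurable g₁) {M₀ : ℝ} (hM₀ : 1 ≤ M₀)
    (hg₁0 : ∀ z, 0 ≤ g₁ z) (hg₁M : ∀ z, g₁ z ≤ M₀) (hg₁x : g₁ x = 0)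
    {ε : ℝ} (hε : 0 < ε) :
    ∃ h : X → ℝ, LowerSemicontinuous h ∧ (∀ z, 0 ≤ h z) ∧ (∀ z, h z ≤ M₀) ∧
      (∀ z, g₁ z ≤ h z) ∧
      ∀ y t, x ∈ ball y t → 0 < t → t < R →
        (⨍ z in ball y t, h z ^ p ∂μ) ≤ (⨍ z in ball y t, g₁ z ^ p ∂μ) + ε := by
  have hp0 : 0 < p := lt_of_lt_of_le one_pos hp
  have hD0 : 0 < D := lt_trans one_pos hD
  set R' : ℝ := 2*R with hR'def
  have hR' : 0 < R' := by positivity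
  set a : ℕ → ℝ := fun k => 2*R'/2^k with hadef
  set b : ℕ → ℝ := fun k => R'/(2*2^k) with hbdef
  have hapos : ∀ k, 0 < a k := fun k => by rw [hadef]; positivity
  have hbpos : ∀ k, 0 < b k := fun k => by rw [hbdef]; positivity
  set U : ℕ → Set X := fun k => ball x (a k) \ closedBall x (b k) with hUdef
  have hUopen : ∀ k, IsOpen (U k) := fun k => isOpen_ball.sdiff isClosed_closedBall
  have hUmeas : ∀ k, MeasurableSet (U k) := fun k => (hUopen k).measurableSet
  have hUsub : ∀ k, U k ⊆ ball x (a 0) := by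
    intro k z hz
    refine mem_ball.2 (lt_of_lt_of_le (mem_ball.1 hz.1) ?_)
    rw [hadef]
    simp only
    apply div_le_div_of_nonneg_left (by positivity) (by positivity)
    exact one_le_pow₀ one_le_two
  have hcover : ∀ z, z ≠ x → dist z x < a 0 → ∃ k, z ∈ U k := by
    intro z hz hlt
    have hs : 0 < dist z x := dist_pos.2 hz
    have hex : ∃ k : ℕ, b k < dist z x := by
      obtain ⟨k, hk⟩ := pow_unbounded_of_one_lt (R' / (2 * dist z x)) one_lt_two
      refine ⟨k, ?_⟩
      have h1 : R' < 2 ^ k * (2 * dist z x) := by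
        rwa [div_lt_iff₀ (by positivity)] at hk
      rw [hbdef]
      simp only
      rw [div_lt_iff₀ (by positivity)]
      have h2 : dist z x * (2 * 2 ^ k) = 2 ^ k * (2 * dist z x) := by ring
      linarith
    have hk₀ : b (Nat.find hex) < dist z x := Nat.find_spec hex
    have hk₀up : dist z x < a (Nat.find hex) := by
      rcases Nat.eq_zero_or_pos (Nat.find hex) with h0 | hpos
      · rw [h0]
        exact hlt
      · obtain ⟨k, hks⟩ := Nat.exists_eq_succ_of_ne_zero hpos.ne'
        have hnot : ¬ b k < dist z x := Nat.find_min hex (by rw [hks]; exact Nat.lt_succ_self k)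
        push_neg at hnot
        have he : a (k+1) = 2 * b k := by
          rw [hadef, hbdef]
          simp only
          rw [pow_succ]
          field_simp
        rw [hks, he]
        have := hbpos k
        linarith
    exact ⟨Nat.find hex, mem_ball.2 hk₀up, fun hc => absurd (mem_closedBall.1 hc) (not_le.2 hk₀)⟩
  set Dn : ℝ≥0∞ := ENNReal.ofReal D with hDndef
  set εS : ℝ≥0∞ := ENNReal.ofReal (ε/(2*D^2)) with hεSdef
  have hεS0 : εS ≠ 0 := by
    rw [hεSdef]
    exact (ENNReal.ofReal_pos.2 (by positivity)).ne'
  set f : ℕ → X → ℝ≥0 := fun k z => ((U k).indicator (fun z => g₁ z ^ p) z).toNNReal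
    with hfdef
  have hfmeas : ∀ k, Measurable (f k) := fun k =>
    ((hg₁meas.pow_const p).indicator (hUmeas k)).real_toNNReal
  set εk : ℕ → ℝ≥0∞ := fun k => εS * (2⁻¹)^k * μ (ball x (b k)) with hεkdef
  have hεk0 : ∀ k, εk k ≠ 0 := by
    intro k
    rw [hεkdef]
    refine mul_ne_zero (mul_ne_zero hεS0 ?_) ?_
    · exact pow_ne_zero _ (ENNReal.inv_ne_zero.2 ENNReal.ofNat_ne_top)
    · exact (hball x (b k) (hbpos k)).1.ne'
  choose ℍ hℍlt hℍlsc hℍint using fun k =>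
    exists_lt_lowerSemicontinuous_lintegral_ge μ (f k) (hfmeas k) (hεk0 k)
  set Mp : ℝ≥0∞ := ENNReal.ofReal (M₀^p) with hMpdef
  have hMptop : Mp ≠ ⊤ := ENNReal.ofReal_ne_top
  set G : X → ℝ≥0∞ := fun z => ENNReal.ofReal (g₁ z ^ p) with hGdef
  have hGmeas : Measurable G := (hg₁meas.pow_const p).ennreal_ofReal
  have hGMp : ∀ z, G z ≤ Mp :=
    fun z => ENNReal.ofReal_le_ofReal (Real.rpow_le_rpow (hg₁0 z) (hg₁M z) hp0.le)
  set ind : ℕ → X → ℝ≥0∞ := fun k => (U k).indicator (fun z => min (ℍ k z) Mp) with hinddef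
  have hindmeas : ∀ k, Measurable (ind k) := fun k =>
    (((hℍlsc k).measurable).min measurable_const).indicator (hUmeas k)
  have hindlsc : ∀ k, LowerSemicontinuous (ind k) := fun k =>
    lsc_indicator_ennreal (hUopen k) (lsc_min_const_ennreal (hℍlsc k) Mp)
  have hindMp : ∀ k z, ind k z ≤ Mp := by
    intro k z
    by_cases hz : z ∈ U k
    · rw [hinddef]; simp only [Set.indicator_of_mem hz]; exact min_le_right _ _
    · rw [hinddef]; simp only [Set.indicator_of_notMem hz]; exact zero_le
  set outS : Set X := {z | 2*R < dist z x} with houtSdef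
  have houtopen : IsOpen outS := isOpen_lt continuous_const (continuous_id.dist continuous_const)
  set out : X → ℝ≥0∞ := outS.indicator (fun _ => Mp) with houtdef
  have houtlsc : LowerSemicontinuous out := lsc_indicator_ennreal houtopen lowerSemicontinuous_const
  have houtmeas : Measurable out := measurable_const.indicator houtopen.measurableSet
  have houtMp : ∀ z, out z ≤ Mp := by
    intro z
    by_cases hz : z ∈ outS
    · rw [houtdef]; simp only [Set.indicator_of_mem hz]; exact le_rfl
    · rw [houtdef]; simp only [Set.indicator_of_notMem hz]; exact zero_le
  set H : X → ℝ≥0∞ := fun z => max (⨆ k, ind k z) (out z) with hHdef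
  have hHlsc : LowerSemicontinuous H :=
    lsc_max_ennreal (lowerSemicontinuous_iSup hindlsc) houtlsc
  have hHmeas : Measurable H := (Measurable.iSup hindmeas).max houtmeas
  have hHMp : ∀ z, H z ≤ Mp := fun z =>
    max_le (iSup_le fun k => hindMp k z) (houtMp z)
  have hHtop : ∀ z, H z ≠ ⊤ := fun z => ne_top_of_le_ne_top hMptop (hHMp z)
  -- G ≤ H
  have hfG : ∀ k z, z ∈ U k → (↑(f k z) : ℝ≥0∞) = G z := by
    intro k z hz
    rw [hfdef, hGdef]
    simp only [Set.indicator_of_mem hz]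
    rfl
  have hGH : ∀ z, G z ≤ H z := by
    intro z
    rcases eq_or_ne z x with rfl | hz
    · rw [hGdef]
      simp only [hg₁x, Real.zero_rpow hp0.ne', ENNReal.ofReal_zero]
      exact zero_le
    · rcases lt_or_ge (2*R) (dist z x) with hfar | hnear
      · refine le_trans (hGMp z) (le_max_of_le_right ?_)
        rw [houtdef, Set.indicator_of_mem (show z ∈ outS from hfar)]
      · have hzlt : dist z x < a 0 := by
          rw [hadef]
          simp only [pow_zero, div_one, hR'def]
          linarith
        obtain ⟨k, hk⟩ := hcover z hz hzlt
        have h1 : G z ≤ ind k z := by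
          rw [hinddef]
          simp only [Set.indicator_of_mem hk]
          refine le_min ?_ (hGMp z)
          rw [← hfG k z hk]
          exact (hℍlt k z).le
        exact le_trans h1 (le_max_of_le_left (le_iSup (fun j => ind j z) k))
  -- the ball estimate
  have hballest : ∀ y t, x ∈ ball y t → 0 < t → t < R →
      (⨍ z in ball y t, (H z).toReal ∂μ) ≤ (⨍ z in ball y t, g₁ z ^ p ∂μ) + ε := by
    intro y t hxB ht htR
    have hμB := hball y t ht
    have hμBne : μ (ball y t) ≠ ⊤ := hμB.2.ne
    have htr : 0 < (μ (ball y t)).toReal := ENNReal.toReal_pos hμB.1.ne' hμBne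
    have hBx2t : ball y t ⊆ ball x (2*t) := by
      intro z hz
      rw [mem_ball] at *
      have hxy : dist x y < t := hxB
      calc dist z x ≤ dist z y + dist y x := dist_triangle _ _ _
        _ < t + t := add_lt_add hz (by rwa [dist_comm])
        _ = 2*t := by ring
    have houtB : ∀ z ∈ ball y t, out z = 0 := by
      intro z hz
      have : z ∉ outS := by
        rw [houtSdef]
        simp only [mem_setOf_eq, not_lt]
        have := mem_ball.1 (hBx2t hz)
        linarith
      rw [houtdef, Set.indicator_of_notMem this]
    set e : ℕ → X → ℝ≥0∞ := fun k z => ind k z - G z with hedef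
    have hemeas : ∀ k, Measurable (e k) := fun k => (hindmeas k).sub hGmeas
    have hHpt : ∀ z ∈ ball y t, H z ≤ G z + ∑' k, e k z := by
      intro z hz
      have h1 : H z = ⨆ k, ind k z := by
        rw [hHdef]
        simp only [houtB z hz]
        exact max_eq_left (zero_le)
      rw [h1]
      refine iSup_le fun k => ?_
      calc ind k z ≤ G z + (ind k z - G z) := le_add_tsub
        _ ≤ G z + ∑' j, e j z := add_le_add_right (ENNReal.le_tsum k) _
    have hlint1 : ∫⁻ z in ball y t, H z ∂μ
        ≤ ∫⁻ z in ball y t, G z ∂μ + ∑' k, ∫⁻ z in ball y t, e k z ∂μ := by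
      calc ∫⁻ z in ball y t, H z ∂μ ≤ ∫⁻ z in ball y t, (G z + ∑' k, e k z) ∂μ :=
            setLIntegral_mono (hGmeas.add (Measurable.ennreal_tsum hemeas)) hHpt
        _ = ∫⁻ z in ball y t, G z ∂μ + ∫⁻ z in ball y t, ∑' k, e k z ∂μ :=
            lintegral_add_left hGmeas _
        _ = ∫⁻ z in ball y t, G z ∂μ + ∑' k, ∫⁻ z in ball y t, e k z ∂μ := by
            rw [lintegral_tsum fun k => (hemeas k).aemeasurable]
    have hek : ∀ k, ∫⁻ z in ball y t, e k z ∂μ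
        ≤ εS * (2⁻¹)^k * (Dn * (Dn * μ (ball y t))) := by
      intro k
      by_cases hUB : (U k ∩ ball y t).Nonempty
      · have h2 : ∫⁻ z in ball y t, e k z ∂μ
            ≤ ∫⁻ z, (U k).indicator (fun z => ℍ k z - ↑(f k z)) z ∂μ := by
          refine le_trans (setLIntegral_mono
            ((((hℍlsc k).measurable).sub ((hfmeas k).coe_nnreal_ennreal)).indicator (hUmeas k))
            (fun z _ => ?_)) (setLIntegral_le_lintegral _ _)
          by_cases hzU : z ∈ U k
          · rw [hedef]
            simp only [hinddef, Set.indicator_of_mem hzU]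
            rw [← hfG k z hzU]
            exact tsub_le_tsub_right (min_le_left _ _) _
          · rw [hedef]
            simp only [hinddef, Set.indicator_of_mem, Set.indicator_of_notMem hzU]
            rw [zero_tsub]
        have hfle : ∀ z, (↑(f k z) : ℝ≥0∞) ≤ ℍ k z := fun z => (hℍlt k z).le
        have hfint : ∫⁻ z, (↑(f k z) : ℝ≥0∞) ∂μ ≠ ⊤ := by
          have hle : ∀ z, (↑(f k z) : ℝ≥0∞) ≤ (U k).indicator (fun _ => Mp) z := by
            intro z
            by_cases hzU : z ∈ U k
            · rw [Set.indicator_of_mem hzU, hfG k z hzU]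
              exact hGMp z
            · rw [Set.indicator_of_notMem hzU, hfdef]
              simp only [Set.indicator_of_notMem hzU]
              simp
          refine ne_of_lt (lt_of_le_of_lt (lintegral_mono hle) ?_)
          rw [lintegral_indicator (hUmeas k), setLIntegral_const]
          exact ENNReal.mul_lt_top hMptop.lt_top
            (lt_of_le_of_lt (measure_mono (hUsub k)) (hball x (a 0) (hapos 0)).2)
        have h4 : ∫⁻ z, (ℍ k z - ↑(f k z)) ∂μ ≤ εk k := by
          have hsplit : ∫⁻ z, ℍ k z ∂μ
              = ∫⁻ z, (ℍ k z - ↑(f k z)) ∂μ + ∫⁻ z, (↑(f k z) : ℝ≥0∞) ∂μ := by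
            rw [← lintegral_add_right _ ((hfmeas k).coe_nnreal_ennreal)]
            exact lintegral_congr fun z => (tsub_add_cancel_of_le (hfle z)).symm
          have h5 := hℍint k
          rw [hsplit] at h5
          rw [add_comm] at h5
          exact (ENNReal.add_le_add_iff_left hfint).1 h5
        have h6 : ∫⁻ z, (U k).indicator (fun z => ℍ k z - ↑(f k z)) z ∂μ
            ≤ ∫⁻ z, (ℍ k z - ↑(f k z)) ∂μ :=
          lintegral_mono (Set.indicator_le_self' fun _ _ => zero_le)
        have hbk2t : b k < 2*t := by
          obtain ⟨z, hzU, hzB⟩ := hUB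
          have h5 : b k < dist z x := by
            by_contra hno
            push_neg at hno
            exact hzU.2 (mem_closedBall.2 hno)
          have h7 : dist z x < 2*t := mem_ball.1 (hBx2t hzB)
          linarith
        have hmub : μ (ball x (b k)) ≤ Dn * (Dn * μ (ball y t)) :=
          le_trans (measure_mono (ball_subset_ball hbk2t.le)) (doubling_ball_le hdoub hxB ht)
        calc ∫⁻ z in ball y t, e k z ∂μ
            ≤ ∫⁻ z, (U k).indicator (fun z => ℍ k z - ↑(f k z)) z ∂μ := h2
          _ ≤ ∫⁻ z, (ℍ k z - ↑(f k z)) ∂μ := h6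
          _ ≤ εk k := h4
          _ = εS * (2⁻¹)^k * μ (ball x (b k)) := by rw [hεkdef]
          _ ≤ εS * (2⁻¹)^k * (Dn * (Dn * μ (ball y t))) := mul_le_mul_right hmub _
      · have hzero : ∀ᵐ z ∂μ, z ∈ ball y t → e k z = 0 := by
          refine ae_of_all _ fun z hz => ?_
          have hzU : z ∉ U k := fun hc => hUB ⟨z, hc, hz⟩
          rw [hedef]
          simp only [hinddef, Set.indicator_of_notMem hzU]
          rw [zero_tsub]
        rw [setLIntegral_congr_fun_ae measurableSet_ball hzero]
        simp only [lintegral_zero]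
        exact zero_le
    have htsum : ∑' k, ∫⁻ z in ball y t, e k z ∂μ ≤ ENNReal.ofReal ε * μ (ball y t) := by
      have h1 : ∑' k, ∫⁻ z in ball y t, e k z ∂μ
          ≤ ∑' (k : ℕ), (εS * (Dn * (Dn * μ (ball y t)))) * (2⁻¹)^k := by
        refine ENNReal.tsum_le_tsum fun k => le_trans (hek k) (le_of_eq ?_)
        ring
      rw [ENNReal.tsum_mul_left, ENNReal.tsum_geometric, ENNReal.one_sub_inv_two, inv_inv] at h1
      refine le_trans h1 (le_of_eq ?_)
      have hcalc : εS * (Dn * (Dn * μ (ball y t))) * 2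
          = (εS * Dn * Dn * 2) * μ (ball y t) := by ring
      rw [hcalc]
      congr 1
      rw [hεSdef, hDndef]
      rw [← ENNReal.ofReal_ofNat 2, ← ENNReal.ofReal_mul (by positivity),
        ← ENNReal.ofReal_mul (by positivity), ← ENNReal.ofReal_mul (by positivity)]
      congr 1
      field_simp
    have hGfin : ∫⁻ z in ball y t, G z ∂μ ≠ ⊤ := by
      refine ne_of_lt (lt_of_le_of_lt (setLIntegral_mono measurable_const fun z _ => hGMp z) ?_)
      rw [setLIntegral_const]
      exact ENNReal.mul_lt_top hMptop.lt_top hμB.2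
    have hfinal_enn : ∫⁻ z in ball y t, H z ∂μ
        ≤ ∫⁻ z in ball y t, G z ∂μ + ENNReal.ofReal ε * μ (ball y t) :=
      le_trans hlint1 (add_le_add_right htsum _)
    -- Bochner conversion
    have h𝔥eq : ∫ z in ball y t, (H z).toReal ∂μ = (∫⁻ z in ball y t, H z ∂μ).toReal :=
      integral_toReal (hHmeas.aemeasurable)
        (ae_of_all _ fun z => lt_of_le_of_lt (hHMp z) hMptop.lt_top)
    have hGeq : ∫ z in ball y t, g₁ z ^ p ∂μ = (∫⁻ z in ball y t, G z ∂μ).toReal := by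
      rw [← integral_toReal (hGmeas.aemeasurable)
        (ae_of_all _ fun z => lt_of_le_of_lt (hGMp z) hMptop.lt_top)]
      have he : (fun z => (G z).toReal) = fun z => g₁ z ^ p := by
        funext z
        rw [hGdef]
        exact ENNReal.toReal_ofReal (Real.rpow_nonneg (hg₁0 z) p)
      rw [he]
    have hRHSfin : ∫⁻ z in ball y t, G z ∂μ + ENNReal.ofReal ε * μ (ball y t) ≠ ⊤ := by
      refine ENNReal.add_ne_top.2 ⟨hGfin, ?_⟩
      exact (ENNReal.mul_lt_top ENNReal.ofReal_lt_top hμB.2).ne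
    have htoReal_le : (∫⁻ z in ball y t, H z ∂μ).toReal
        ≤ (∫⁻ z in ball y t, G z ∂μ).toReal + ε * (μ (ball y t)).toReal := by
      have h1 := ENNReal.toReal_mono hRHSfin hfinal_enn
      rw [ENNReal.toReal_add hGfin (ENNReal.mul_lt_top ENNReal.ofReal_lt_top hμB.2).ne,
        ENNReal.toReal_mul, ENNReal.toReal_ofReal hε.le] at h1
      exact h1
    rw [setAverage_eq, setAverage_eq, smul_eq_mul, smul_eq_mul, h𝔥eq, hGeq]
    calc (μ (ball y t)).toReal⁻¹ * (∫⁻ z in ball y t, H z ∂μ).toReal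
        ≤ (μ (ball y t)).toReal⁻¹ *
          ((∫⁻ z in ball y t, G z ∂μ).toReal + ε * (μ (ball y t)).toReal) :=
          mul_le_mul_of_nonneg_left htoReal_le (inv_nonneg.2 htr.le)
      _ = (μ (ball y t)).toReal⁻¹ * (∫⁻ z in ball y t, G z ∂μ).toReal + ε := by
          field_simp
  -- assemble
  refine ⟨fun z => ((H z).toReal) ^ (1/p), ?_, ?_, ?_, ?_, ?_⟩
  · exact lsc_rpow (lsc_toReal hHlsc hMptop hHMp) (fun z => ENNReal.toReal_nonneg)
      (by positivity)
  · exact fun z => Real.rpow_nonneg ENNReal.toReal_nonneg _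
  · intro z
    have h1 : (H z).toReal ≤ M₀ ^ p := by
      have := ENNReal.toReal_mono hMptop (hHMp z)
      rwa [hMpdef, ENNReal.toReal_ofReal (by positivity)] at this
    calc ((H z).toReal) ^ (1/p) ≤ (M₀ ^ p) ^ (1/p) :=
          Real.rpow_le_rpow ENNReal.toReal_nonneg h1 (by positivity)
      _ = M₀ := by rw [one_div, Real.rpow_rpow_inv (by positivity) hp0.ne']
  · intro z
    have h1 : g₁ z ^ p ≤ (H z).toReal := by
      have := ENNReal.toReal_mono (hHtop z) (hGH z)
      rwa [hGdef, ENNReal.toReal_ofReal (Real.rpow_nonneg (hg₁0 z) p)] at this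
    calc g₁ z = (g₁ z ^ p) ^ (1/p) := by
          rw [one_div, Real.rpow_rpow_inv (hg₁0 z) hp0.ne']
      _ ≤ ((H z).toReal) ^ (1/p) :=
          Real.rpow_le_rpow (Real.rpow_nonneg (hg₁0 z) p) h1 (by positivity)
  · intro y t hxB ht htR
    have he : (fun z => (((H z).toReal) ^ (1/p)) ^ p) = fun z => (H z).toReal := by
      funext z
      rw [one_div, Real.rpow_inv_rpow ENNReal.toReal_nonneg hp0.ne']
    calc (⨍ z in ball y t, (((H z).toReal) ^ (1/p)) ^ p ∂μ)
        = ⨍ z in ball y t, (H z).toReal ∂μ := by rw [he]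
      _ ≤ (⨍ z in ball y t, g₁ z ^ p ∂μ) + ε := hballest y t hxB ht htR

end PartF


section PartG

variable {X : Type*} [MetricSpace X] [MeasurableSpace X] [BorelSpace X]

theorem setAverage_mono' {μ : Measure X} {s : Set X} (hs : MeasurableSet s) {f g : X → ℝ}
    (hf : IntegrableOn f s μ) (hg : IntegrableOn g s μ) (hle : ∀ z ∈ s, f z ≤ g z) :
    ⨍ z in s, f z ∂μ ≤ ⨍ z in s, g z ∂μ := by
  rw [setAverage_eq, setAverage_eq, smul_eq_mul, smul_eq_mul]
  exact mul_le_mul_of_nonneg_left (setIntegral_mono_on hf hg hs hle)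
    (inv_nonneg.2 ENNReal.toReal_nonneg)

theorem setAverage_nonneg' {μ : Measure X} {s : Set X} {f : X → ℝ} (h0 : ∀ z, 0 ≤ f z) :
    0 ≤ ⨍ z in s, f z ∂μ := by
  rw [setAverage_eq, smul_eq_mul]
  exact mul_nonneg (inv_nonneg.2 ENNReal.toReal_nonneg) (integral_nonneg fun z => h0 z)

end PartG

theorem pointwise_hardy_iff_curve_condition_vanishing
    {X : Type*} [MetricSpace X] [MeasurableSpace X] [BorelSpace X] [ProperSpace X]
    [Nontrivial X] (μ : Measure X) (C_QC D : ℝ)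
    (hQC : IsQuasiconvex X C_QC) (hD : 1 < D)
    (hdoub : IsDoubling μ D) (hball : BallsPosFinite μ)
    (p' p : ℝ) (hp'1 : 1 ≤ p') (hp'p : p' < p)
    (hPI : ∃ C_PI > 0, ∃ lam ≥ 1, Poincare μ p' C_PI lam)
    (Ω : Set X) (hΩo : IsOpen Ω) (hΩne : Ω.Nonempty) (hΩprop : Ω ≠ univ) :
    (∃ C_H > 0, ∃ κ ≥ 1, PointwiseHardy μ p Ω C_H κ) ↔
      (∃ C_Γ > 0, ∃ ν > C_QC, ∃ κ ≥ 1, ∀ g : X → ℝ,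
        LowerSemicontinuous g → (∀ y, 0 ≤ g y) → (∃ M, ∀ y, g y ≤ M) →
        (∀ y ∉ Ω, g y = 0) → ∀ x ∈ Ω,
        curveInfSet g x Ωᶜ ν ≤ C_Γ * infDist x Ωᶜ * restrMax μ p (κ * infDist x Ωᶜ) g x) := by
  have hp : 1 ≤ p := le_of_lt (lt_of_le_of_lt hp'1 hp'p)
  constructor
  · rintro ⟨C_H, hCH, κ, hκ, hH⟩
    refine ⟨4*C_H+1, by linarith, |C_QC| + 4*C_H + 2, ?_, κ, hκ, ?_⟩
    · have := le_abs_self C_QC; linarith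
    · intro g hlsc hg0 hgM _ x hx
      exact hardy_imp_curve μ hQC hball hp hΩo hΩprop hCH hκ hH g hlsc hg0 hgM x hx
  · rintro ⟨C_Γ, hCΓ, ν, hν, κ, hκ, hcc⟩
    refine ⟨C_Γ, hCΓ, κ, hκ, ?_⟩
    intro u g hLip hvan hgmeas hg0 hgMex hug x hx
    classical
    obtain ⟨Mg, hMg⟩ := hgMex
    -- measure-theoretic instances
    haveI : IsFiniteMeasureOnCompacts μ := by
      constructor
      intro K hK
      obtain ⟨r, hr⟩ := hK.isBounded.subset_ball x
      have hsub : K ⊆ ball x (max r 0 + 1) := by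
        refine subset_trans hr (ball_subset_ball ?_)
        have := le_max_left r 0
        linarith
      exact lt_of_le_of_lt (measure_mono hsub) (hball x _ (by positivity)).2
    set d : ℝ := infDist x Ωᶜ with hddef
    have hΩcne : Ωᶜ.Nonempty := Set.nonempty_compl.2 hΩprop
    have hxc : x ∉ Ωᶜ := fun h => h hx
    have hd : 0 < d := (hΩo.isClosed_compl.notMem_iff_infDist_pos hΩcne).1 hxc
    have hκ0 : 0 < κ := lt_of_lt_of_le one_pos hκ
    have hκd : 0 < κ * d := mul_pos hκ0 hd
    have hp0 : 0 < p := lt_of_lt_of_le one_pos hp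
    have hC1 : 1 ≤ C_QC := one_le_of_isQuasiconvex hQC
    have hCQC0 : 0 < C_QC := lt_of_lt_of_le one_pos hC1
    set M₀ : ℝ := max Mg 1 with hM₀def
    have hM₀1 : 1 ≤ M₀ := le_max_right _ _
    have hM₀0 : 0 < M₀ := lt_of_lt_of_le one_pos hM₀1
    have hgM₀ : ∀ y, g y ≤ M₀ := fun y => le_trans (hMg y) (le_max_left _ _)
    have habsg : ∀ y, |g y| ≤ M₀ := fun y => by
      rw [abs_of_nonneg (hg0 y)]; exact hgM₀ y
    set g₁ : X → ℝ := fun z => if z ∈ Ω ∧ z ≠ x then g z else 0 with hg₁def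
    have hg₁meas : Measurable g₁ := by
      refine Measurable.ite ?_ hgmeas measurable_const
      exact (hΩo.measurableSet.inter (measurableSet_singleton x).compl)
    have hg₁0 : ∀ z, 0 ≤ g₁ z := by
      intro z
      rw [hg₁def]
      by_cases hz : z ∈ Ω ∧ z ≠ x
      · simp only [if_pos hz]; exact hg0 z
      · simp only [if_neg hz]; exact le_rfl
    have hg₁M : ∀ z, g₁ z ≤ M₀ := by
      intro z
      rw [hg₁def]
      by_cases hz : z ∈ Ω ∧ z ≠ x
      · simp only [if_pos hz]; exact hgM₀ z
      · simp only [if_neg hz]; exact hM₀0.le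
    have hg₁x : g₁ x = 0 := by
      rw [hg₁def]
      simp
    have hg₁g : ∀ z, g₁ z ≤ |g z| := by
      intro z
      rw [hg₁def]
      by_cases hz : z ∈ Ω ∧ z ≠ x
      · simp only [if_pos hz]; exact le_abs_self _
      · simp only [if_neg hz]; exact abs_nonneg _
    -- main estimate with margin η
    have key : ∀ η : ℝ, 0 < η → |u x| ≤ C_Γ * d * (restrMax μ p (κ * d) g x + η) := by
      intro η hη
      have hε : (0:ℝ) < η ^ p := Real.rpow_pos_of_pos hη p
      obtain ⟨h, hhlsc, hh0, hhM₀, hhge, hhball⟩ :=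
        exists_lsc_majorant μ hD hdoub hball hp hκd hg₁meas hM₀1 hg₁0 hg₁M hg₁x hε
      have hhmeas : Measurable h := hhlsc.measurable
      set h' : X → ℝ := Ω.indicator h with hh'def
      have hh'lsc : LowerSemicontinuous h' := lsc_indicator_real hΩo hhlsc hh0
      have hh'meas : Measurable h' := hhmeas.indicator hΩo.measurableSet
      have hh'0 : ∀ z, 0 ≤ h' z := by
        intro z
        rw [hh'def]
        by_cases hz : z ∈ Ω
        · rw [Set.indicator_of_mem hz]; exact hh0 z
        · rw [Set.indicator_of_notMem hz]
      have hh'M : ∀ z, h' z ≤ M₀ := by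
        intro z
        rw [hh'def]
        by_cases hz : z ∈ Ω
        · rw [Set.indicator_of_mem hz]; exact hhM₀ z
        · rw [Set.indicator_of_notMem hz]; exact hM₀0.le
      have habsh' : ∀ z, |h' z| ≤ M₀ := fun z => by
        rw [abs_of_nonneg (hh'0 z)]; exact hh'M z
      have hh'le : ∀ z, h' z ≤ h z := by
        intro z
        rw [hh'def]
        by_cases hz : z ∈ Ω
        · rw [Set.indicator_of_mem hz]
        · rw [Set.indicator_of_notMem hz]; exact hh0 z
      have hh'van : ∀ z, z ∉ Ω → h' z = 0 := fun z hz => by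
        rw [hh'def, Set.indicator_of_notMem hz]
      have hh'ge : ∀ z, z ∈ Ω → z ≠ x → g z ≤ h' z := by
        intro z hz hne
        rw [hh'def, Set.indicator_of_mem hz]
        refine le_trans ?_ (hhge z)
        rw [hg₁def]
        simp only [if_pos (And.intro hz hne)]
        exact le_rfl
      -- curve condition applied to h'
      have hccres := hcc h' hh'lsc hh'0 ⟨M₀, hh'M⟩ hh'van x hx
      rw [← hddef] at hccres
      -- |u x| is at most the curve infimum
      have hdlt : infDist x Ωᶜ < ν * d / C_QC := by
        rw [← hddef, lt_div_iff₀ hCQC0]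
        nlinarith [hd, hν]
      obtain ⟨z₀, hz₀, hz₀d⟩ := (infDist_lt_iff hΩcne).1 hdlt
      have hxz₀ : x ≠ z₀ := fun he => hz₀ (he ▸ hx)
      obtain ⟨γ₀, ⟨hγ₀s, hγ₀e⟩, hγ₀len⟩ := hQC x z₀ hxz₀
      have hγ₀lenν : γ₀.len ≤ ν * infDist x Ωᶜ := by
        rw [← hddef]
        calc γ₀.len ≤ C_QC * dist x z₀ := hγ₀len
          _ ≤ C_QC * (ν * d / C_QC) := mul_le_mul_of_nonneg_left hz₀d.le hCQC0.le
          _ = ν * d := by field_simp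
      have hSne : { I | ∃ γ : Curve X, γ.ConnectsSet x Ωᶜ ∧ γ.len ≤ ν * infDist x Ωᶜ ∧
          I = γ.integral h' }.Nonempty :=
        ⟨γ₀.integral h', γ₀, ⟨hγ₀s, by rw [hγ₀e]; exact hz₀⟩, hγ₀lenν, rfl⟩
      have hle : |u x| ≤ curveInfSet h' x Ωᶜ ν := by
        refine le_csInf hSne ?_
        rintro I ⟨γ, hconn, hlen, rfl⟩
        exact abs_le_curve_integral hΩo hvan hgmeas habsg hug hx hh'meas habsh' hh'0
          hh'ge γ hconn
      -- bound the maximal function of h'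
      have hrm : restrMax μ p (κ * d) h' x ≤ restrMax μ p (κ * d) g x + η := by
        rw [restrMax_of_pos hκd]
        refine Real.sSup_le ?_ (add_nonneg (restrMax_nonneg hκd) hη.le)
        rintro m ⟨y, t, hxy, ht, htr, rfl⟩
        have hμB := hball y t ht
        have hint_h' : IntegrableOn (fun z => |h' z| ^ p) (ball y t) μ :=
          integrableOn_abs_rpow hh'meas habsh' hp0 hμB.2
        have hint_h : IntegrableOn (fun z => h z ^ p) (ball y t) μ := by
          have habsh : ∀ z, |h z| ≤ M₀ := fun z => by
            rw [abs_of_nonneg (hh0 z)]; exact hhM₀ z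
          have he : (fun z => h z ^ p) = fun z => |h z| ^ p := by
            funext z; rw [abs_of_nonneg (hh0 z)]
          rw [he]
          exact integrableOn_abs_rpow hhmeas habsh hp0 hμB.2
        have hint_g₁ : IntegrableOn (fun z => g₁ z ^ p) (ball y t) μ := by
          have habsg₁ : ∀ z, |g₁ z| ≤ M₀ := fun z => by
            rw [abs_of_nonneg (hg₁0 z)]; exact hg₁M z
          have he : (fun z => g₁ z ^ p) = fun z => |g₁ z| ^ p := by
            funext z; rw [abs_of_nonneg (hg₁0 z)]
          rw [he]
          exact integrableOn_abs_rpow hg₁meas habsg₁ hp0 hμB.2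
        have hint_g : IntegrableOn (fun z => |g z| ^ p) (ball y t) μ :=
          integrableOn_abs_rpow hgmeas habsg hp0 hμB.2
        have hb1 : ⨍ z in ball y t, |h' z| ^ p ∂μ ≤ ⨍ z in ball y t, h z ^ p ∂μ := by
          refine setAverage_mono' measurableSet_ball hint_h' hint_h fun z _ => ?_
          rw [abs_of_nonneg (hh'0 z)]
          exact Real.rpow_le_rpow (hh'0 z) (hh'le z) hp0.le
        have hb2 := hhball y t hxy ht htr
        have hb3 : ⨍ z in ball y t, g₁ z ^ p ∂μ ≤ ⨍ z in ball y t, |g z| ^ p ∂μ := by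
          refine setAverage_mono' measurableSet_ball hint_g₁ hint_g fun z _ => ?_
          exact Real.rpow_le_rpow (hg₁0 z) (hg₁g z) hp0.le
        have havg_nonneg : (0:ℝ) ≤ ⨍ z in ball y t, g₁ z ^ p ∂μ :=
          setAverage_nonneg' fun z => Real.rpow_nonneg (hg₁0 z) p
        have hstep : (⨍ z in ball y t, |h' z| ^ p ∂μ) ^ (1/p)
            ≤ (⨍ z in ball y t, g₁ z ^ p ∂μ) ^ (1/p) + η := by
          calc (⨍ z in ball y t, |h' z| ^ p ∂μ) ^ (1/p)
              ≤ ((⨍ z in ball y t, g₁ z ^ p ∂μ) + η ^ p) ^ (1/p) := by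
                refine Real.rpow_le_rpow setAverage_abs_rpow_nonneg ?_ (by positivity)
                exact le_trans hb1 hb2
            _ ≤ (⨍ z in ball y t, g₁ z ^ p ∂μ) ^ (1/p) + (η ^ p) ^ (1/p) :=
                real_add_rpow_le havg_nonneg (by positivity) (by positivity)
                  (by rw [div_le_one hp0]; exact hp)
            _ = (⨍ z in ball y t, g₁ z ^ p ∂μ) ^ (1/p) + η := by
                rw [one_div, Real.rpow_rpow_inv hη.le hp0.ne']
        have hlast : (⨍ z in ball y t, g₁ z ^ p ∂μ) ^ (1/p) ≤ restrMax μ p (κ * d) g x := by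
          have h1 : (⨍ z in ball y t, g₁ z ^ p ∂μ) ^ (1/p)
              ≤ (⨍ z in ball y t, |g z| ^ p ∂μ) ^ (1/p) :=
            Real.rpow_le_rpow havg_nonneg hb3 (by positivity)
          exact le_trans h1 (le_restrMax hgmeas habsg hM₀0.le hp0
            (fun y t ht => hball y t ht) hxy ht htr)
        calc (⨍ z in ball y t, |h' z| ^ p ∂μ) ^ (1/p)
            ≤ (⨍ z in ball y t, g₁ z ^ p ∂μ) ^ (1/p) + η := hstep
          _ ≤ restrMax μ p (κ * d) g x + η := by linarith
      calc |u x| ≤ curveInfSet h' x Ωᶜ ν := hle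
        _ ≤ C_Γ * d * restrMax μ p (κ * d) h' x := hccres
        _ ≤ C_Γ * d * (restrMax μ p (κ * d) g x + η) :=
            mul_le_mul_of_nonneg_left hrm (mul_nonneg (le_of_lt hCΓ) hd.le)
    -- pass to the limit
    refine le_of_forall_pos_le_add fun ε' hε' => ?_
    have hcoef : 0 < C_Γ * d := mul_pos hCΓ hd
    have h1 := key (ε' / (C_Γ * d)) (div_pos hε' hcoef)
    calc |u x| ≤ C_Γ * d * (restrMax μ p (κ * d) g x + ε' / (C_Γ * d)) := h1
      _ = C_Γ * d * restrMax μ p (κ * d) g x + ε' := by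
          field_simp
end

section
/- Let 1 ≤ p < ∞ and assume in addition that diam(X) = ∞. Let E ⊂ X be a Borel set, let x ∈ X and ε > 0. Then there exists an open set U ⊂ X such that E∖{x} ⊂ U (so 1_E ≤ 1_U on X∖{x}) and M_{p,r}(1_U − 1_E)(x) < ε for every r > 0. -/
open MeasureTheory Metric Set
open scoped ENNReal NNReal Topology
open Filter

lemma weight_tsum_le_one : (∑' k : ℤ, ((2:ℝ≥0∞)⁻¹) ^ (k.natAbs + 2)) ≤ 1 := by
  rw [tsum_of_nat_of_neg_add_one ENNReal.summable ENNReal.summable]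
  have h1 : (∑' n : ℕ, ((2:ℝ≥0∞)⁻¹) ^ ((n:ℤ).natAbs + 2)) =
      2⁻¹^2 * ∑' n : ℕ, ((2:ℝ≥0∞)⁻¹) ^ n := by
    rw [← ENNReal.tsum_mul_left]
    congr 1 with n
    simp [pow_add, mul_comm]
  have h2 : (∑' n : ℕ, ((2:ℝ≥0∞)⁻¹) ^ ((-(n+1) : ℤ).natAbs + 2)) =
      2⁻¹^3 * ∑' n : ℕ, ((2:ℝ≥0∞)⁻¹) ^ n := by
    rw [← ENNReal.tsum_mul_left]
    congr 1 with n
    have : (-(n+1) : ℤ).natAbs = n + 1 := by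
      omega
    rw [this]
    ring
  rw [h1, h2, ENNReal.tsum_geometric, ENNReal.one_sub_inv_two, inv_inv]
  have : (2:ℝ≥0∞)⁻¹^2 * 2 + 2⁻¹^3 * 2 = 2⁻¹ + 2⁻¹ * 2⁻¹ := by
    rw [pow_two, pow_succ, pow_two, mul_assoc, mul_assoc, mul_assoc,
      ENNReal.inv_mul_cancel (by norm_num) (by norm_num)]
    ring
  rw [this]
  calc (2:ℝ≥0∞)⁻¹ + 2⁻¹ * 2⁻¹ ≤ 2⁻¹ + 2⁻¹ := by
        gcongr
        exact ENNReal.mul_le_of_le_div (by simp [ENNReal.div_self])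
    _ = 1 := ENNReal.inv_two_add_inv_two

section Aux
variable {X : Type*} [MetricSpace X] [MeasurableSpace X]

lemma doub_chain (μ : Measure X) {D : ℝ} (hdoub : IsDoubling μ D)
    (y : X) (t : ℝ) (ht : 0 < t) (n : ℕ) :
    μ (ball y (2^n * t)) ≤ (ENNReal.ofReal D)^n * μ (ball y t) := by
  induction n with
  | zero => simp
  | succ n ih =>
    have h1 : (2:ℝ)^(n+1) * t = 2 * (2^n * t) := by ring
    rw [h1, pow_succ]
    calc μ (ball y (2*(2^n*t))) ≤ ENNReal.ofReal D * μ (ball y (2^n*t)) :=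
          hdoub y _ (by positivity)
      _ ≤ ENNReal.ofReal D * ((ENNReal.ofReal D)^n * μ (ball y t)) := by gcongr
      _ = (ENNReal.ofReal D)^n * ENNReal.ofReal D * μ (ball y t) := by ring

lemma core_open [BorelSpace X] [ProperSpace X] (μ : Measure X) {D : ℝ} (hD0 : 0 < D)
    (hdoub : IsDoubling μ D) (hball : BallsPosFinite μ)
    (E : Set X) (hE : MeasurableSet E) (x : X) (η : ℝ≥0∞) (hη0 : η ≠ 0) (hηt : η ≠ ⊤) :
    ∃ U : Set X, IsOpen U ∧ E \ {x} ⊆ U ∧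
      ∀ y t, 0 < t → x ∈ ball y t → μ ((U \ E) ∩ ball y t) ≤ η * μ (ball y t) := by
  haveI : IsLocallyFiniteMeasure μ :=
    ⟨fun z => ⟨ball z 1, ball_mem_nhds z one_pos, (hball z 1 one_pos).2⟩⟩
  set Dp : ℝ≥0∞ := (ENNReal.ofReal D)^6 with hDp
  have hDp0 : Dp ≠ 0 := pow_ne_zero 6 (ENNReal.ofReal_pos.2 hD0).ne'
  have hDpt : Dp ≠ ⊤ := by
    simp only [hDp]
    exact ENNReal.pow_ne_top ENNReal.ofReal_ne_top
  set c : ℝ≥0∞ := η / Dp with hc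
  have hc0 : c ≠ 0 := (ENNReal.div_pos hη0 hDpt).ne'
  set A : ℤ → Set X := fun k => {z | (2:ℝ)^k ≤ dist z x} ∩ {z | dist z x < (2:ℝ)^(k+1)}
    with hA
  have hAmeas : ∀ k, MeasurableSet (A k) := fun k =>
    ((isClosed_le continuous_const ((continuous_id.dist continuous_const))).measurableSet).inter
      ((isOpen_lt (continuous_id.dist continuous_const) continuous_const).measurableSet)
  have hSfin : ∀ k, μ (E ∩ A k) ≠ ⊤ := by
    intro k
    have hsub : E ∩ A k ⊆ ball x ((2:ℝ)^(k+1)) := fun z hz => mem_ball.2 hz.2.2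
    exact ((measure_mono hsub).trans_lt
      (hball x _ (zpow_pos two_pos _)).2).ne
  set w : ℤ → ℝ≥0∞ := fun k => ((2:ℝ≥0∞)⁻¹)^(k.natAbs+2) with hw
  have hw0 : ∀ k, w k ≠ 0 := fun k => pow_ne_zero _ (by simp)
  set δ : ℤ → ℝ≥0∞ := fun k => c * w k * μ (ball x ((2:ℝ)^(k+3))) with hδ
  have hδ0 : ∀ k, δ k ≠ 0 := fun k =>
    mul_ne_zero (mul_ne_zero hc0 (hw0 k)) (hball x _ (zpow_pos two_pos _)).1.ne'
  choose V hVsub hVopen hVfin hVlt using fun k : ℤ =>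
    ((hE.inter (hAmeas k)).exists_isOpen_diff_lt (hSfin k) (hδ0 k))
  set Uk : ℤ → Set X := fun k => V k ∩ {z | (2:ℝ)^(k-1) < dist z x} with hUk
  refine ⟨⋃ k, Uk k, isOpen_iUnion (fun k => (hVopen k).inter
    (isOpen_lt continuous_const (continuous_id.dist continuous_const))), ?_, ?_⟩
  · rintro z ⟨hzE, hzx⟩
    have hd : 0 < dist z x := dist_pos.2 (by simpa using hzx)
    obtain ⟨k, hk1, hk2⟩ := exists_mem_Ico_zpow hd one_lt_two
    exact mem_iUnion.2 ⟨k, hVsub k ⟨hzE, hk1, hk2⟩,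
      lt_of_lt_of_le (zpow_lt_zpow_right₀ one_lt_two (by omega)) hk1⟩
  · intro y t ht hxB
    have hxy : dist x y < t := mem_ball.1 hxB
    have hdB : ∀ z ∈ ball y t, dist z x < 2*t := by
      intro z hz
      have h1 : dist z y < t := mem_ball.1 hz
      have h3 := dist_triangle z y x
      rw [dist_comm y x] at h3
      linarith
    calc μ (((⋃ k, Uk k) \ E) ∩ ball y t)
        ≤ ∑' k : ℤ, μ ((Uk k \ E) ∩ ball y t) := by
          refine (measure_mono ?_).trans (measure_iUnion_le _)
          rintro z ⟨⟨hzU, hzE⟩, hzB⟩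
          obtain ⟨k, hk⟩ := mem_iUnion.1 hzU
          exact mem_iUnion.2 ⟨k, ⟨hk, hzE⟩, hzB⟩
      _ ≤ ∑' k : ℤ, w k * (c * μ (ball x (32*t))) := by
          refine ENNReal.tsum_le_tsum fun k => ?_
          by_cases hk : (2:ℝ)^(k-1) < 2*t
          · have h1 : (Uk k \ E) ∩ ball y t ⊆ V k \ (E ∩ A k) := by
              rintro z ⟨⟨⟨hzV, _⟩, hzE⟩, _⟩
              exact ⟨hzV, fun h => hzE h.1⟩
            refine ((measure_mono h1).trans (hVlt k).le).trans ?_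
            have hbs : ball x ((2:ℝ)^(k+3)) ⊆ ball x (32*t) := by
              refine ball_subset_ball ?_
              have he : (2:ℝ)^(k+3) = 2^(k-1) * 16 := by
                rw [show (k+3) = (k-1) + 4 by ring, zpow_add₀ (two_ne_zero) (k-1) 4]
                norm_num
              rw [he]; linarith
            calc c * w k * μ (ball x ((2:ℝ)^(k+3)))
                ≤ c * w k * μ (ball x (32*t)) := mul_le_mul_right (measure_mono hbs) _
              _ = w k * (c * μ (ball x (32*t))) := by ring
          · have hempty : (Uk k \ E) ∩ ball y t = ∅ := by
              rw [eq_empty_iff_forall_notMem]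
              rintro z ⟨⟨⟨_, hz1⟩, _⟩, hzB⟩
              have := hdB z hzB
              push_neg at hk
              simp only [mem_setOf_eq] at hz1
              linarith
            rw [hempty]
            simp
      _ = (∑' k : ℤ, w k) * (c * μ (ball x (32*t))) := ENNReal.tsum_mul_right
      _ ≤ 1 * (c * μ (ball x (32*t))) := by
          gcongr
          exact weight_tsum_le_one
      _ = c * μ (ball x (32*t)) := one_mul _
      _ ≤ c * (Dp * μ (ball y t)) := by
          gcongr
          have hsub : ball x (32*t) ⊆ ball y ((2:ℝ)^(6:ℕ)*t) := by
            intro z hz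
            rw [mem_ball] at hz ⊢
            have h3 := dist_triangle z x y
            have h4 : dist x y < t := mem_ball.1 hxB
            have h5 : (2:ℝ)^(6:ℕ) * t = 64 * t := by norm_num
            rw [h5]
            linarith
          exact (measure_mono hsub).trans (doub_chain μ hdoub y t ht 6)
      _ = (c * Dp) * μ (ball y t) := by ring
      _ = η * μ (ball y t) := by rw [ENNReal.div_mul_cancel hDp0 hDpt]

end Aux



theorem indicator_open_approximation
    {X : Type*} [MetricSpace X] [MeasurableSpace X] [BorelSpace X] [ProperSpace X]
    [Nontrivial X] (μ : Measure X) (C_QC D : ℝ)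
    (hQC : IsQuasiconvex X C_QC) (hD : 1 < D)
    (hdoub : IsDoubling μ D) (hball : BallsPosFinite μ)
    (p : ℝ) (hp : 1 ≤ p) (hdiam : EMetric.diam (univ : Set X) = ⊤)
    (E : Set X) (hE : MeasurableSet E) (x : X) (ε : ℝ) (hε : 0 < ε) :
    ∃ U : Set X, IsOpen U ∧ E \ {x} ⊆ U ∧
      ∀ r : ℝ, 0 < r →
        restrMax μ p r
          (fun y => U.indicator (fun _ => (1:ℝ)) y - E.indicator (fun _ => (1:ℝ)) y) x < ε := by
  have hp0 : (0:ℝ) < p := lt_of_lt_of_le one_pos hp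
  have hp' : p ≠ 0 := hp0.ne'
  set η₀ : ℝ := min ((ε/2)^p) 1 with hη₀def
  have hη₀pos : 0 < η₀ := lt_min (Real.rpow_pos_of_pos (by linarith) p) one_pos
  set half : ℝ≥0∞ := ENNReal.ofReal (η₀/2) with hhalf
  have hhalf0 : half ≠ 0 := (ENNReal.ofReal_pos.2 (by linarith)).ne'
  obtain ⟨U₀, hU₀open, hU₀sub, hU₀bound⟩ :=
    core_open μ (lt_trans one_pos hD) hdoub hball E hE x half hhalf0 ENNReal.ofReal_ne_top
  have key : ∃ U : Set X, IsOpen U ∧ E \ {x} ⊆ U ∧ ∀ y t, 0 < t → x ∈ ball y t →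
      μ (((U \ E) ∪ (E \ U)) ∩ ball y t) ≤ ENNReal.ofReal η₀ * μ (ball y t) := by
    by_cases hcase : x ∈ E ∧ μ {x} ≠ 0
    · obtain ⟨hxE, hatom⟩ := hcase
      have hfin : μ (ball x 1 \ E) ≠ ⊤ :=
        ((measure_mono diff_subset).trans_lt (hball x 1 one_pos).2).ne
      have hiInter : (⋂ n : ℕ, (ball x (1/(n+1)) \ E)) = ∅ := by
        rw [eq_empty_iff_forall_notMem]
        intro z hz
        have hzE : z ∉ E := (mem_iInter.1 hz 0).2
        have hzx : z = x := by
          by_contra hne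
          have hd : 0 < dist z x := dist_pos.2 hne
          obtain ⟨n, hn⟩ := exists_nat_one_div_lt hd
          have h2 := (mem_iInter.1 hz n).1
          rw [mem_ball] at h2
          linarith
        exact hzE (hzx ▸ hxE)
      have htend : Filter.Tendsto (fun n : ℕ => μ (ball x (1/(n+1)) \ E))
          Filter.atTop (𝓝 0) := by
        have h := tendsto_measure_iInter_atTop (μ := μ)
          (s := fun n : ℕ => ball x (1/(n+1)) \ E)
          (fun n => (isOpen_ball.measurableSet.diff hE).nullMeasurableSet)
          (fun m n hmn => diff_subset_diff_left (ball_subset_ball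
            (one_div_le_one_div_of_le (by positivity)
              (by exact_mod_cast add_le_add_left (Nat.cast_le.2 hmn) 1))))
          ⟨0, by simpa using hfin⟩
        rw [hiInter] at h
        simpa [Function.comp_def] using h
      have hatomfin : μ {x} ≠ ⊤ :=
        ((measure_mono (singleton_subset_iff.2 (mem_ball_self one_pos))).trans_lt
          (hball x 1 one_pos).2).ne
      have htarget : (0:ℝ≥0∞) < half * μ {x} :=
        ENNReal.mul_pos hhalf0 hatom
      obtain ⟨n, hn⟩ := (htend.eventually_lt_const htarget).exists
      have hnpos : (0:ℝ) < 1/((n:ℝ)+1) := by positivity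
      refine ⟨U₀ ∪ ball x (1/(n+1)), hU₀open.union isOpen_ball,
        fun z hz => Or.inl (hU₀sub hz), ?_⟩
      intro y t ht hxB
      have hEU : E \ (U₀ ∪ ball x (1/(n+1))) = ∅ := by
        rw [eq_empty_iff_forall_notMem]
        rintro z ⟨hzE, hzU⟩
        by_cases hzx : z = x
        · exact hzU (Or.inr (hzx ▸ mem_ball_self hnpos))
        · exact hzU (Or.inl (hU₀sub ⟨hzE, hzx⟩))
      have hsub2 : ((((U₀ ∪ ball x (1/(n+1))) \ E) ∪ (E \ (U₀ ∪ ball x (1/(n+1)))))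
          ∩ ball y t) ⊆ ((U₀ \ E) ∩ ball y t) ∪ (ball x (1/(n+1)) \ E) := by
        rw [hEU, union_empty]
        rintro z ⟨⟨(h|h), hzE⟩, hzB⟩
        · exact Or.inl ⟨⟨h, hzE⟩, hzB⟩
        · exact Or.inr ⟨h, hzE⟩
      calc μ ((((U₀ ∪ ball x (1/(n+1))) \ E) ∪ (E \ (U₀ ∪ ball x (1/(n+1))))) ∩ ball y t)
          ≤ μ (((U₀ \ E) ∩ ball y t) ∪ (ball x (1/(n+1)) \ E)) := measure_mono hsub2
        _ ≤ μ ((U₀ \ E) ∩ ball y t) + μ (ball x (1/(n+1)) \ E) := measure_union_le _ _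
        _ ≤ half * μ (ball y t) + half * μ {x} :=
            add_le_add (hU₀bound y t ht hxB) hn.le
        _ ≤ half * μ (ball y t) + half * μ (ball y t) := by
            gcongr
            exact singleton_subset_iff.2 hxB
        _ = ENNReal.ofReal η₀ * μ (ball y t) := by
            rw [← add_mul, hhalf, ← ENNReal.ofReal_add (by linarith) (by linarith), add_halves]
    · refine ⟨U₀, hU₀open, hU₀sub, ?_⟩
      intro y t ht hxB
      have hEU : μ ((E \ U₀) ∩ ball y t) = 0 := by
        push_neg at hcase
        by_cases hxE : x ∈ E
        · refine measure_mono_null ?_ (hcase hxE)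
          rintro z ⟨⟨hzE, hzU⟩, _⟩
          by_contra hzx
          exact hzU (hU₀sub ⟨hzE, hzx⟩)
        · refine measure_mono_null (fun z hz => ?_) (measure_empty (μ := μ))
          obtain ⟨⟨hzE, hzU⟩, _⟩ := hz
          exact hzU (hU₀sub ⟨hzE, fun h => hxE ((mem_singleton_iff.1 h) ▸ hzE)⟩)
      calc μ (((U₀ \ E) ∪ (E \ U₀)) ∩ ball y t)
          ≤ μ ((U₀ \ E) ∩ ball y t) + μ ((E \ U₀) ∩ ball y t) := by
            rw [union_inter_distrib_right]
            exact measure_union_le _ _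
        _ ≤ half * μ (ball y t) + 0 := add_le_add (hU₀bound y t ht hxB) hEU.le
        _ ≤ ENNReal.ofReal η₀ * μ (ball y t) := by
            rw [add_zero]
            gcongr
            exact ENNReal.ofReal_le_ofReal (by linarith)
  obtain ⟨U, hUopen, hUsub, hUbound⟩ := key
  refine ⟨U, hUopen, hUsub, ?_⟩
  intro r hr
  unfold restrMax
  rw [if_neg hr.ne']
  have hle : sSup { m | ∃ y t, x ∈ ball y t ∧ 0 < t ∧ t < r ∧
      m = (⨍ z in ball y t, |U.indicator (fun _ => (1:ℝ)) z -
        E.indicator (fun _ => (1:ℝ)) z| ^ p ∂μ) ^ (1/p) } ≤ ε/2 := by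
    apply Real.sSup_le _ (by linarith)
    rintro m ⟨y, t, hxB, ht, htr, rfl⟩
    set S := (U \ E) ∪ (E \ U) with hS
    have hSmeas : MeasurableSet S :=
      (hUopen.measurableSet.diff hE).union (hE.diff hUopen.measurableSet)
    have h0 : ∀ z, |U.indicator (fun _ => (1:ℝ)) z - E.indicator (fun _ => (1:ℝ)) z| ^ p
        = S.indicator (fun _ => (1:ℝ)) z := by
      intro z
      by_cases hzU : z ∈ U <;> by_cases hzE : z ∈ E <;>
        simp [hS, indicator, hzU, hzE, Real.zero_rpow hp', Real.one_rpow]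
    have havg : (⨍ z in ball y t, |U.indicator (fun _ => (1:ℝ)) z -
        E.indicator (fun _ => (1:ℝ)) z| ^ p ∂μ)
        = (μ (ball y t)).toReal⁻¹ * (μ (S ∩ ball y t)).toReal := by
      rw [setAverage_eq]
      simp only [h0]
      rw [setIntegral_indicator hSmeas, setIntegral_const, smul_eq_mul, smul_eq_mul,
        mul_one, inter_comm]
      rfl
    have hμB := hball y t ht
    have h1 : μ (S ∩ ball y t) ≤ ENNReal.ofReal η₀ * μ (ball y t) := hUbound y t ht hxB
    have h2 : (μ (S ∩ ball y t)).toReal ≤ η₀ * (μ (ball y t)).toReal := by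
      have h3 := ENNReal.toReal_mono
        (ENNReal.mul_ne_top ENNReal.ofReal_ne_top hμB.2.ne) h1
      rwa [ENNReal.toReal_mul, ENNReal.toReal_ofReal hη₀pos.le] at h3
    have hMpos : 0 < (μ (ball y t)).toReal := ENNReal.toReal_pos hμB.1.ne' hμB.2.ne
    have hratio : (μ (ball y t)).toReal⁻¹ * (μ (S ∩ ball y t)).toReal ≤ η₀ := by
      have h4 : (μ (ball y t)).toReal⁻¹ * (μ (S ∩ ball y t)).toReal ≤
          (μ (ball y t)).toReal⁻¹ * (η₀ * (μ (ball y t)).toReal) :=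
        mul_le_mul_of_nonneg_left h2 (inv_nonneg.2 hMpos.le)
      rwa [mul_comm η₀, ← mul_assoc, inv_mul_cancel₀ hMpos.ne', one_mul] at h4
    rw [havg]
    calc ((μ (ball y t)).toReal⁻¹ * (μ (S ∩ ball y t)).toReal) ^ (1/p)
        ≤ η₀ ^ (1/p) := Real.rpow_le_rpow (by positivity) hratio (by positivity)
      _ ≤ ((ε/2)^p) ^ (1/p) :=
          Real.rpow_le_rpow hη₀pos.le (min_le_left _ _) (by positivity)
      _ = ε/2 := by
          rw [← Real.rpow_mul (by linarith), mul_one_div_cancel hp', Real.rpow_one]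
  linarith
end

section
/- Let 1 ≤ p < ∞ and 1 ≤ q < p with max{1, p/2} ≤ q. Let ∅ ≠ Ω ⊊ X be open, x ∈ Ω, κ ≥ 1, τ > 0, k ∈ ℕ, and let g: X → [0,1] be lower semicontinuous with M_{q,4κ d(x,Ω^c)} g(x) ≤ τ. For i = 1, …, k set E_i = {z ∈ Ω : M_{q,κ d(x,Ω^c)} g(z) > 4^i τ} and define h = (1/k) Σ_{i=1}^k 1_{E_i} 4^{iq/p}. Then (M_{p,κ d(x,Ω^c)} h(x))^p ≤ 2^p D^5 / k^{p−1}. -/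
open MeasureTheory Metric Set

set_option linter.unusedSectionVars false
set_option linter.unusedVariables false

section Helpers

open ENNReal

variable {X : Type*} [MetricSpace X] [MeasurableSpace X] [BorelSpace X]
variable {μ : Measure X} {D : ℝ} {g : X → ℝ} {q : ℝ}

lemma abs_rpow_le_one (hrange : ∀ y, g y ∈ Icc (0:ℝ) 1) (hq : 0 < q) (z : X) :
    |g z| ^ q ≤ 1 :=
  Real.rpow_le_one (abs_nonneg _)
    (abs_le.2 ⟨by linarith [(hrange z).1], (hrange z).2⟩) hq.le

lemma integrableOn_rpow (hg : Measurable g) (hrange : ∀ y, g y ∈ Icc (0:ℝ) 1)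
    (hq : 0 < q) {s : Set X} (hs : μ s ≠ ⊤) :
    IntegrableOn (fun z => |g z| ^ q) s μ := by
  refine Measure.integrableOn_of_bounded hs ((hg.abs.pow_const q).aestronglyMeasurable) (M := 1) ?_
  filter_upwards with z
  rw [Real.norm_eq_abs, abs_of_nonneg (Real.rpow_nonneg (abs_nonneg _) _)]
  exact abs_rpow_le_one hrange hq z

lemma setAvg_nonneg {f : X → ℝ} (hf : ∀ z, 0 ≤ f z) (s : Set X) :
    0 ≤ ⨍ z in s, f z ∂μ := by
  rw [setAverage_eq, smul_eq_mul]
  exact mul_nonneg (by positivity) (integral_nonneg fun z => hf z)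

lemma avg_rpow_le_one (hball : BallsPosFinite μ) (hg : Measurable g)
    (hrange : ∀ y, g y ∈ Icc (0:ℝ) 1) (hq : 0 < q) (y : X) {t : ℝ} (ht : 0 < t) :
    ⨍ z in ball y t, |g z| ^ q ∂μ ≤ 1 := by
  obtain ⟨hpos, hfin⟩ := hball y t ht
  have htr : (0:ℝ) < (μ (ball y t)).toReal := ENNReal.toReal_pos hpos.ne' hfin.ne
  rw [setAverage_eq, smul_eq_mul]
  have h1 : ∫ z in ball y t, |g z| ^ q ∂μ ≤ ∫ _ in ball y t, (1:ℝ) ∂μ :=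
    setIntegral_mono (integrableOn_rpow hg hrange hq hfin.ne)
      (integrableOn_const hfin.ne) (fun z => abs_rpow_le_one hrange hq z)
  rw [setIntegral_const, smul_eq_mul, mul_one] at h1
  calc (μ (ball y t)).toReal⁻¹ * ∫ z in ball y t, |g z| ^ q ∂μ
      ≤ (μ (ball y t)).toReal⁻¹ * (μ (ball y t)).toReal := by
        exact mul_le_mul_of_nonneg_left h1 (by positivity)
    _ = 1 := inv_mul_cancel₀ htr.ne'

lemma le_restrMax_s16 (hball : BallsPosFinite μ) (hg : Measurable g)
    (hrange : ∀ y, g y ∈ Icc (0:ℝ) 1) (hq : 0 < q) {z y : X} {t r : ℝ}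
    (hz : z ∈ ball y t) (ht : 0 < t) (htr : t < r) :
    (⨍ w in ball y t, |g w| ^ q ∂μ) ^ (1/q) ≤ restrMax μ q r g z := by
  have hr : r ≠ 0 := (ht.trans htr).ne'
  rw [restrMax, if_neg hr]
  refine le_csSup ⟨1, ?_⟩ ⟨y, t, hz, ht, htr, rfl⟩
  rintro m ⟨y', t', hz', ht', htr', rfl⟩
  exact Real.rpow_le_one (setAvg_nonneg (fun z => by positivity) _)
    (avg_rpow_le_one hball hg hrange hq y' ht') (by positivity)

lemma avg_le_of_restrMax_le (hball : BallsPosFinite μ) (hg : Measurable g)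
    (hrange : ∀ y, g y ∈ Icc (0:ℝ) 1) (hq : 0 < q) {z y : X} {t r c : ℝ}
    (h : restrMax μ q r g z ≤ c) (hz : z ∈ ball y t) (ht : 0 < t) (htr : t < r) :
    ⨍ w in ball y t, |g w| ^ q ∂μ ≤ c ^ q := by
  have h0 : 0 ≤ ⨍ w in ball y t, |g w| ^ q ∂μ := setAvg_nonneg (fun z => by positivity) _
  have h1 : (⨍ w in ball y t, |g w| ^ q ∂μ) ^ (1/q) ≤ c :=
    (le_restrMax_s16 hball hg hrange hq hz ht htr).trans h
  have h2 := Real.rpow_le_rpow (Real.rpow_nonneg h0 _) h1 hq.le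
  rwa [one_div, Real.rpow_inv_rpow h0 hq.ne'] at h2

lemma exists_ball_of_lt_restrMax (hq : 0 < q) {c r : ℝ} {z : X} (hc : 0 < c)
    (hr : 0 < r) (h : c < restrMax μ q r g z) :
    ∃ y t, z ∈ ball y t ∧ 0 < t ∧ t < r ∧ c ^ q < ⨍ w in ball y t, |g w| ^ q ∂μ := by
  by_contra hcon
  push_neg at hcon
  rw [restrMax, if_neg hr.ne'] at h
  refine absurd h (not_lt.2 (Real.sSup_le ?_ hc.le))
  rintro m ⟨y, t, hz, ht, htr, rfl⟩
  have h2 : ⨍ w in ball y t, |g w| ^ q ∂μ ≤ c ^ q := hcon y t hz ht htr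
  calc (⨍ w in ball y t, |g w| ^ q ∂μ) ^ (1/q)
      ≤ (c ^ q) ^ (1/q) :=
        Real.rpow_le_rpow (setAvg_nonneg (fun z => by positivity) _) h2 (by positivity)
    _ = c := by rw [one_div, Real.rpow_rpow_inv hc.le hq.ne']

lemma isOpen_restrMax_gt (hball : BallsPosFinite μ) (hg : Measurable g)
    (hrange : ∀ y, g y ∈ Icc (0:ℝ) 1) (hq : 0 < q) {c r : ℝ} (hc : 0 < c) (hr : 0 < r) :
    IsOpen {z : X | c < restrMax μ q r g z} := by
  rw [isOpen_iff_forall_mem_open]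
  intro z hz
  obtain ⟨y, t, hzy, ht, htr, havg⟩ := exists_ball_of_lt_restrMax hq hc hr hz
  refine ⟨ball y t, fun w hw => ?_, isOpen_ball, hzy⟩
  calc c = (c ^ q) ^ (1/q) := by rw [one_div, Real.rpow_rpow_inv hc.le hq.ne']
    _ < (⨍ w in ball y t, |g w| ^ q ∂μ) ^ (1/q) :=
        Real.rpow_lt_rpow (by positivity) havg (by positivity)
    _ ≤ restrMax μ q r g w := le_restrMax_s16 hball hg hrange hq hw ht htr

lemma IsDoubling.meas_ball_le (hdoub : IsDoubling μ D) (y : X) {s : ℝ} (hs : 0 < s) :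
    ∀ (n : ℕ) {t : ℝ}, t ≤ 2 ^ n * s → μ (ball y t) ≤ ENNReal.ofReal D ^ n * μ (ball y s)
  | 0, t, h => by simpa using measure_mono (ball_subset_ball (by simpa using h))
  | (n+1), t, h => by
      calc μ (ball y t) ≤ μ (ball y (2 * (2 ^ n * s))) := by
            refine measure_mono (ball_subset_ball ?_)
            rw [pow_succ] at h; linarith
        _ ≤ ENNReal.ofReal D * μ (ball y (2 ^ n * s)) := hdoub y (2 ^ n * s) (by positivity)
        _ ≤ ENNReal.ofReal D * (ENNReal.ofReal D ^ n * μ (ball y s)) :=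
            mul_le_mul_right (IsDoubling.meas_ball_le hdoub y hs n le_rfl) _
        _ = ENNReal.ofReal D ^ (n+1) * μ (ball y s) := by rw [pow_succ', mul_assoc]

lemma geom_sum_le {a : ℝ} (ha : 2 ≤ a) : ∀ j : ℕ, ∑ i ∈ Finset.Icc 1 j, a ^ i ≤ 2 * a ^ j
  | 0 => by simp
  | (j+1) => by
      rw [Finset.sum_Icc_succ_top (by omega)]
      have h1 := geom_sum_le ha j
      have h2 : (0:ℝ) ≤ a ^ j := by positivity
      have h3 : 2 * a ^ j ≤ a * a ^ j := by nlinarith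
      calc (∑ i ∈ Finset.Icc 1 j, a ^ i) + a ^ (j+1) ≤ 2 * a ^ j + a ^ (j+1) := by linarith
        _ ≤ 2 * a ^ (j+1) := by rw [pow_succ]; nlinarith

end Helpers

section Weak

open ENNReal

variable {X : Type*} [MetricSpace X] [MeasurableSpace X] [BorelSpace X]
variable {μ : Measure X} {D : ℝ} {g : X → ℝ} {q : ℝ}

lemma weak_estimate (hdoub : IsDoubling μ D) (hD : 1 < D) (hball : BallsPosFinite μ)
    (hg : Measurable g) (hrange : ∀ y, g y ∈ Icc (0:ℝ) 1) (hq1 : 1 ≤ q)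
    {Ω : Set X} {x : X} {κ τ : ℝ} (hτ : 0 < τ)
    (hd : 0 < κ * infDist x Ωᶜ)
    (hMg : restrMax μ q (4 * κ * infDist x Ωᶜ) g x ≤ τ)
    {A : ℝ} (hA : 4 ≤ A)
    {y : X} {t : ℝ} (hxB : x ∈ ball y t) (ht : 0 < t) (htr : t < κ * infDist x Ωᶜ) :
    A ^ q * (μ ({z | A * τ < restrMax μ q (κ * infDist x Ωᶜ) g z} ∩ ball y t)).toReal
      ≤ D ^ 5 * (μ (ball y t)).toReal := by
  have hq0 : 0 < q := by linarith
  have hD0 : 0 < D := by linarith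
  have hA0 : 0 < A := by linarith
  have hAτ : 0 < A * τ := by positivity
  set d := infDist x Ωᶜ with hd_def
  set r := κ * d with hr_def
  set E := {z | A * τ < restrMax μ q r g z} with hE_def
  have hBfin : μ (ball y t) ≠ ⊤ := (hball y t ht).2.ne
  have hEBfin : μ (E ∩ ball y t) ≠ ⊤ :=
    ne_top_of_le_ne_top hBfin (measure_mono inter_subset_right)
  have h4r : ∀ {s : ℝ}, s < r → ∀ {s' : ℝ}, s' < r → s + s' + s + s' < 4 * κ * d := by
    intro s hs s' hs'
    have : (4:ℝ) * κ * d = 4 * r := by rw [hr_def]; ring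
    rw [this]; linarith
  by_cases hcase : A ^ q ≤ D ^ 2
  · have h1 : (μ (E ∩ ball y t)).toReal ≤ (μ (ball y t)).toReal :=
      ENNReal.toReal_mono hBfin (measure_mono inter_subset_right)
    have h2 : (D:ℝ) ^ 2 ≤ D ^ 5 := pow_le_pow_right₀ hD.le (by norm_num)
    calc A ^ q * (μ (E ∩ ball y t)).toReal ≤ D ^ 2 * (μ (ball y t)).toReal :=
          mul_le_mul hcase h1 ENNReal.toReal_nonneg (by positivity)
      _ ≤ D ^ 5 * (μ (ball y t)).toReal :=
          mul_le_mul_of_nonneg_right h2 ENNReal.toReal_nonneg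
  · push_neg at hcase
    -- Step 1: witnesses with small radii
    have hwit : ∀ z ∈ E ∩ ball y t, ∃ c s, z ∈ ball c s ∧ 0 < s ∧ s < t ∧
        (A*τ)^q * (μ (ball c s)).toReal < ∫ w in ball c s, |g w| ^ q ∂μ := by
      rintro z ⟨hzE, hzB⟩
      obtain ⟨c, s, hzc, hs, hsr, havg⟩ := exists_ball_of_lt_restrMax hq0 hAτ hd hzE
      have hfin : μ (ball c s) ≠ ⊤ := (hball c s hs).2.ne
      have hpos : 0 < (μ (ball c s)).toReal :=
        ENNReal.toReal_pos (hball c s hs).1.ne' hfin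
      have hint : (A*τ)^q * (μ (ball c s)).toReal < ∫ w in ball c s, |g w| ^ q ∂μ := by
        rw [setAverage_eq, smul_eq_mul, measureReal_def] at havg
        have h2 := mul_lt_mul_of_pos_left havg hpos
        rw [← mul_assoc, mul_inv_cancel₀ hpos.ne', one_mul, mul_comm] at h2
        exact h2
      refine ⟨c, s, hzc, hs, ?_, hint⟩
      by_contra hst
      push_neg at hst
      have hWpos : (0:ℝ) < 2*s + 2*t := by linarith
      have hxW : x ∈ ball c (2*s + 2*t) := by
        rw [mem_ball]
        have h1 : dist x c ≤ dist x z + dist z c := dist_triangle _ _ _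
        have h2 : dist x z ≤ dist x y + dist z y := by
          have := dist_triangle x y z
          rw [dist_comm z y]; linarith [dist_triangle x y z]
        have h3 : dist x y < t := mem_ball.1 hxB
        have h4 : dist z y < t := mem_ball.1 hzB
        have h5 : dist z c < s := mem_ball.1 hzc
        linarith
      have hW4 : 2*s + 2*t < 4 * κ * d := by
        have := h4r hsr htr; linarith
      have havgW : ⨍ w in ball c (2*s+2*t), |g w| ^ q ∂μ ≤ τ ^ q :=
        avg_le_of_restrMax_le hball hg hrange hq0 hMg hxW hWpos hW4
      have hWfin : μ (ball c (2*s+2*t)) ≠ ⊤ := (hball c _ hWpos).2.ne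
      have hWreal : 0 ≤ (μ (ball c (2*s+2*t))).toReal := ENNReal.toReal_nonneg
      have hsubI : ∫ w in ball c s, |g w| ^ q ∂μ ≤ ∫ w in ball c (2*s+2*t), |g w| ^ q ∂μ :=
        setIntegral_mono_set (integrableOn_rpow hg hrange hq0 hWfin)
          (Filter.Eventually.of_forall fun w => by positivity)
          (HasSubset.Subset.eventuallyLE (ball_subset_ball (by linarith)))
      have hIW : ∫ w in ball c (2*s+2*t), |g w| ^ q ∂μ
          ≤ τ ^ q * (μ (ball c (2*s+2*t))).toReal := by
        rw [setAverage_eq, smul_eq_mul, measureReal_def] at havgW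
        rcases eq_or_lt_of_le hWreal with hzero | hWpos'
        · have h0 : (μ (ball c (2*s+2*t))).toReal = 0 := hzero.symm
          have : ∫ w in ball c (2*s+2*t), |g w| ^ q ∂μ = 0 := by
            have hμ0 : μ (ball c (2*s+2*t)) = 0 := by
              have := ENNReal.toReal_eq_zero_iff (μ (ball c (2*s+2*t)))
              rcases this.1 h0 with h | h
              · exact h
              · exact absurd h hWfin
            rw [Measure.restrict_eq_zero.2 hμ0, integral_zero_measure]
          rw [this, h0, mul_zero]
        · have h2 := mul_le_mul_of_nonneg_left havgW hWpos'.le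
          rw [← mul_assoc, mul_inv_cancel₀ hWpos'.ne', one_mul] at h2
          exact h2.trans_eq (mul_comm _ _)
      have hWle : (μ (ball c (2*s+2*t))).toReal ≤ D^2 * (μ (ball c s)).toReal := by
        have h1 := hdoub.meas_ball_le c hs 2 (t := 2*s+2*t) (by norm_num; linarith)
        have h2 : ((ENNReal.ofReal D)^2 * μ (ball c s)).toReal = D^2 * (μ (ball c s)).toReal := by
          rw [ENNReal.toReal_mul, ENNReal.toReal_pow, ENNReal.toReal_ofReal hD0.le]
        exact h2 ▸ ENNReal.toReal_mono
          (ENNReal.mul_ne_top (ENNReal.pow_ne_top ENNReal.ofReal_ne_top) hfin) h1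
      have hABq : (A*τ)^q = A^q * τ^q := Real.mul_rpow hA0.le hτ.le
      have hτq : (0:ℝ) < τ^q := Real.rpow_pos_of_pos hτ q
      have key : A^q * (τ^q * (μ (ball c s)).toReal) < D^2 * (τ^q * (μ (ball c s)).toReal) := by
        calc A^q * (τ^q * (μ (ball c s)).toReal) = (A*τ)^q * (μ (ball c s)).toReal := by
              rw [hABq]; ring
          _ < ∫ w in ball c s, |g w| ^ q ∂μ := hint
          _ ≤ ∫ w in ball c (2*s+2*t), |g w| ^ q ∂μ := hsubI
          _ ≤ τ^q * (μ (ball c (2*s+2*t))).toReal := hIW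
          _ ≤ τ^q * (D^2 * (μ (ball c s)).toReal) :=
              mul_le_mul_of_nonneg_left hWle hτq.le
          _ = D^2 * (τ^q * (μ (ball c s)).toReal) := by ring
      have : A^q < D^2 := lt_of_mul_lt_mul_right key (by positivity)
      linarith [hcase]
    choose! c s hmem hspos hst hint using hwit
    obtain ⟨u, hu_sub, hu_disj, hu_cov⟩ :=
      Vitali.exists_disjoint_subfamily_covering_enlargement_closedBall (E ∩ ball y t) c s t
        (fun z hz => (hst z hz).le) 4 (by norm_num)
    have hsubB4 : ∀ b ∈ E ∩ ball y t, closedBall (c b) (s b) ⊆ ball y (4*t) := by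
      intro b hb w hw
      have h1 : dist b (c b) < s b := mem_ball.1 (hmem b hb)
      have h2 : dist b y < t := mem_ball.1 hb.2
      have hw' : dist w (c b) ≤ s b := mem_closedBall.1 hw
      have h4 : dist w y ≤ dist w (c b) + dist (c b) b + dist b y := dist_triangle4 w (c b) b y
      have hsb : s b < t := hst b hb
      rw [mem_ball, dist_comm (c b) b] at *
      linarith
    have hcover : E ∩ ball y t ⊆ ⋃ b ∈ u, closedBall (c b) (4 * s b) := by
      intro z hz
      obtain ⟨b, hbu, hsub⟩ := hu_cov z hz
      exact Set.mem_biUnion hbu (hsub (mem_closedBall.2 (le_of_lt (mem_ball.1 (hmem z hz)))))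
    have hcnt : u.Countable := by
      have hfinU : μ (⋃ b : u, closedBall (c b) (s b)) ≠ ⊤ := by
        refine ne_top_of_le_ne_top (hball y (4*t) (by linarith)).2.ne (measure_mono ?_)
        exact iUnion_subset fun b => hsubB4 b (hu_sub b.2)
      have hdisj : Pairwise (Function.onFun Disjoint fun b : u => closedBall (c b) (s b)) := by
        intro b b' hbb'
        exact hu_disj b.2 b'.2 (fun h => hbb' (Subtype.ext h))
      have hcount := MeasureTheory.Measure.countable_meas_pos_of_disjoint_of_meas_iUnion_ne_top μ
        (fun b : u => measurableSet_closedBall) hdisj hfinU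
      have huniv : {i : u | 0 < μ (closedBall (c i) (s i))} = Set.univ := by
        ext b
        simp only [mem_setOf_eq, mem_univ, iff_true]
        exact lt_of_lt_of_le (hball (c b) (s b) (hspos b (hu_sub b.2))).1
          (measure_mono ball_subset_closedBall)
      rw [huniv, Set.countable_univ_iff] at hcount
      exact Set.countable_coe_iff.1 hcount
    haveI : Countable ↥u := hcnt.to_subtype
    set G : X → ℝ≥0∞ := fun w => ENNReal.ofReal (|g w| ^ q) with hG_def
    set Λ : ℝ≥0∞ := ENNReal.ofReal ((A*τ)^q) with hΛ_def
    have hΛ0 : Λ ≠ 0 := (ENNReal.ofReal_pos.2 (by positivity)).ne'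
    have hΛtop : Λ ≠ ⊤ := ENNReal.ofReal_ne_top
    have hLb : ∀ b ∈ u, Λ * μ (ball (c b) (s b)) ≤ ∫⁻ w in ball (c b) (s b), G w ∂μ := by
      intro b hb
      have hfin := (hball (c b) (s b) (hspos b (hu_sub hb))).2.ne
      have hint' := hint b (hu_sub hb)
      have heq : ENNReal.ofReal (∫ w in ball (c b) (s b), |g w| ^ q ∂μ)
          = ∫⁻ w in ball (c b) (s b), G w ∂μ :=
        MeasureTheory.ofReal_integral_eq_lintegral_ofReal
          (integrableOn_rpow hg hrange hq0 hfin)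
          (Filter.Eventually.of_forall fun w => by positivity)
      calc Λ * μ (ball (c b) (s b))
          = ENNReal.ofReal ((A*τ)^q * (μ (ball (c b) (s b))).toReal) := by
            rw [ENNReal.ofReal_mul (by positivity), ENNReal.ofReal_toReal hfin]
        _ ≤ ENNReal.ofReal (∫ w in ball (c b) (s b), |g w| ^ q ∂μ) :=
            ENNReal.ofReal_le_ofReal hint'.le
        _ = _ := heq
    have hB4fin : μ (ball y (4*t)) ≠ ⊤ := (hball y (4*t) (by linarith)).2.ne
    have hG4 : ∫⁻ w in ball y (4*t), G w ∂μ ≤ ENNReal.ofReal (τ^q) * μ (ball y (4*t)) := by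
      have hx4 : x ∈ ball y (4*t) := by
        rw [mem_ball]; have := mem_ball.1 hxB; linarith
      have h4κ : 4*t < 4 * κ * d := by
        have : (4:ℝ) * κ * d = 4 * r := by rw [hr_def]; ring
        rw [this]; linarith
      have havg4 : ⨍ w in ball y (4*t), |g w| ^ q ∂μ ≤ τ^q :=
        avg_le_of_restrMax_le hball hg hrange hq0 hMg hx4 (by linarith) h4κ
      have hIle : ∫ w in ball y (4*t), |g w| ^ q ∂μ ≤ τ^q * (μ (ball y (4*t))).toReal := by
        rw [setAverage_eq, smul_eq_mul, measureReal_def] at havg4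
        have hpos4 : 0 < (μ (ball y (4*t))).toReal :=
          ENNReal.toReal_pos (hball y (4*t) (by linarith)).1.ne' hB4fin
        have h2 := mul_le_mul_of_nonneg_left havg4 hpos4.le
        rw [← mul_assoc, mul_inv_cancel₀ hpos4.ne', one_mul] at h2
        exact h2.trans_eq (mul_comm _ _)
      have heq : ENNReal.ofReal (∫ w in ball y (4*t), |g w| ^ q ∂μ)
          = ∫⁻ w in ball y (4*t), G w ∂μ :=
        MeasureTheory.ofReal_integral_eq_lintegral_ofReal
          (integrableOn_rpow hg hrange hq0 hB4fin)
          (Filter.Eventually.of_forall fun w => by positivity)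
      calc ∫⁻ w in ball y (4*t), G w ∂μ
          = ENNReal.ofReal (∫ w in ball y (4*t), |g w| ^ q ∂μ) := heq.symm
        _ ≤ ENNReal.ofReal (τ^q * (μ (ball y (4*t))).toReal) := ENNReal.ofReal_le_ofReal hIle
        _ = ENNReal.ofReal (τ^q) * μ (ball y (4*t)) := by
            rw [ENNReal.ofReal_mul (by positivity), ENNReal.ofReal_toReal hB4fin]
    have hsumL : ∑' b : u, ∫⁻ w in ball (c b) (s b), G w ∂μ
        ≤ ENNReal.ofReal (τ^q) * μ (ball y (4*t)) := by
      have hdisj' : Pairwise (Function.onFun Disjoint fun b : u => ball (c b) (s b)) := by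
        intro b b' hbb'
        exact (hu_disj b.2 b'.2 (fun h => hbb' (Subtype.ext h))).mono
          ball_subset_closedBall ball_subset_closedBall
      have heq : ∑' b : u, ∫⁻ w in ball (c b) (s b), G w ∂μ
          = ∫⁻ w in ⋃ b : u, ball (c b) (s b), G w ∂μ :=
        (lintegral_iUnion (fun b => measurableSet_ball) hdisj' G).symm
      rw [heq]
      refine le_trans (lintegral_mono_set ?_) hG4
      exact iUnion_subset fun b =>
        (ball_subset_closedBall.trans (hsubB4 b (hu_sub b.2)))
    have hfinal : μ (E ∩ ball y t)
        ≤ ENNReal.ofReal D ^ 5 * (Λ⁻¹ * (ENNReal.ofReal (τ^q) * μ (ball y t))) := by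
      calc μ (E ∩ ball y t) ≤ μ (⋃ b ∈ u, closedBall (c b) (4 * s b)) := measure_mono hcover
        _ ≤ ∑' b : u, μ (closedBall (c b) (4 * s b)) := measure_biUnion_le μ hcnt _
        _ ≤ ∑' b : u, ENNReal.ofReal D ^ 3 * (Λ⁻¹ * ∫⁻ w in ball (c b) (s b), G w ∂μ) := by
            refine ENNReal.tsum_le_tsum fun b => ?_
            have hsb := hspos b (hu_sub b.2)
            have h1 : μ (closedBall (c b) (4 * s b)) ≤ μ (ball (c b) (8 * s b)) := by
              refine measure_mono fun w hw => ?_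
              rw [mem_ball]
              have := mem_closedBall.1 hw
              linarith
            have h2 := hdoub.meas_ball_le (c b) hsb 3 (t := 8 * s b) (by norm_num)
            have h3 : μ (ball (c b) (s b)) ≤ Λ⁻¹ * ∫⁻ w in ball (c b) (s b), G w ∂μ := by
              have hcancel : Λ⁻¹ * (Λ * μ (ball (c b) (s b))) = μ (ball (c b) (s b)) := by
                rw [← mul_assoc, ENNReal.inv_mul_cancel hΛ0 hΛtop, one_mul]
              calc μ (ball (c b) (s b)) = Λ⁻¹ * (Λ * μ (ball (c b) (s b))) := hcancel.symm
                _ ≤ Λ⁻¹ * ∫⁻ w in ball (c b) (s b), G w ∂μ :=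
                    mul_le_mul_right (hLb b b.2) _
            exact h1.trans (h2.trans (mul_le_mul_right h3 _))
        _ = ENNReal.ofReal D ^ 3 * (Λ⁻¹ * ∑' b : u, ∫⁻ w in ball (c b) (s b), G w ∂μ) := by
            rw [ENNReal.tsum_mul_left, ENNReal.tsum_mul_left]
        _ ≤ ENNReal.ofReal D ^ 3 * (Λ⁻¹ * (ENNReal.ofReal (τ^q) * μ (ball y (4*t)))) := by
            exact mul_le_mul_right (mul_le_mul_right hsumL _) _
        _ ≤ ENNReal.ofReal D ^ 3 * (Λ⁻¹ * (ENNReal.ofReal (τ^q) *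
              (ENNReal.ofReal D ^ 2 * μ (ball y t)))) := by
            refine mul_le_mul_right (mul_le_mul_right (mul_le_mul_right ?_ _) _) _
            exact hdoub.meas_ball_le y ht 2 (by norm_num)
        _ = ENNReal.ofReal D ^ 5 * (Λ⁻¹ * (ENNReal.ofReal (τ^q) * μ (ball y t))) := by ring
    have hRHSne : ENNReal.ofReal D ^ 5 * (Λ⁻¹ * (ENNReal.ofReal (τ^q) * μ (ball y t))) ≠ ⊤ :=
      ENNReal.mul_ne_top (ENNReal.pow_ne_top ENNReal.ofReal_ne_top)
        (ENNReal.mul_ne_top (ENNReal.inv_ne_top.2 hΛ0)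
          (ENNReal.mul_ne_top ENNReal.ofReal_ne_top hBfin))
    have h5 := ENNReal.toReal_mono hRHSne hfinal
    have htoReal : (ENNReal.ofReal D ^ 5 * (Λ⁻¹ * (ENNReal.ofReal (τ^q) * μ (ball y t)))).toReal
        = D^5 * (((A*τ)^q)⁻¹ * (τ^q * (μ (ball y t)).toReal)) := by
      rw [ENNReal.toReal_mul, ENNReal.toReal_mul, ENNReal.toReal_mul, ENNReal.toReal_pow,
        ENNReal.toReal_ofReal hD0.le, hΛ_def, ENNReal.toReal_inv,
        ENNReal.toReal_ofReal (by positivity), ENNReal.toReal_ofReal (by positivity)]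
    rw [htoReal] at h5
    have hABq : (A*τ)^q = A^q * τ^q := Real.mul_rpow hA0.le hτ.le
    have hAq : (0:ℝ) < A^q := Real.rpow_pos_of_pos hA0 q
    have hτq : (0:ℝ) < τ^q := Real.rpow_pos_of_pos hτ q
    calc A ^ q * (μ (E ∩ ball y t)).toReal
        ≤ A ^ q * (D^5 * (((A*τ)^q)⁻¹ * (τ^q * (μ (ball y t)).toReal))) :=
          mul_le_mul_of_nonneg_left h5 hAq.le
      _ = D ^ 5 * (μ (ball y t)).toReal := by
          rw [hABq, mul_inv]
          field_simp

end Weak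

theorem maximal_estimate_for_test_function
    {X : Type*} [MetricSpace X] [MeasurableSpace X] [BorelSpace X] [ProperSpace X]
    [Nontrivial X] (μ : Measure X) (C_QC D : ℝ)
    (hQC : IsQuasiconvex X C_QC) (hD : 1 < D)
    (hdoub : IsDoubling μ D) (hball : BallsPosFinite μ)
    (p q : ℝ) (hq1 : 1 ≤ q) (hqp : q < p) (hmax : max 1 (p/2) ≤ q)
    (Ω : Set X) (hΩo : IsOpen Ω) (hΩne : Ω.Nonempty) (hΩprop : Ω ≠ univ)
    (x : X) (hx : x ∈ Ω) (κ : ℝ) (hκ : 1 ≤ κ) (τ : ℝ) (hτ : 0 < τ) (k : ℕ)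
    (g : X → ℝ) (hlsc : LowerSemicontinuous g) (hrange : ∀ y, g y ∈ Icc (0:ℝ) 1)
    (hMg : restrMax μ q (4 * κ * infDist x Ωᶜ) g x ≤ τ) :
    (restrMax μ p (κ * infDist x Ωᶜ)
        (fun z => (1/(k:ℝ)) * ∑ i ∈ Finset.Icc 1 k,
          (({z' : X | z' ∈ Ω ∧ (4:ℝ) ^ i * τ < restrMax μ q (κ * infDist x Ωᶜ) g z'}).indicator
              (fun _ => (1:ℝ)) z) * (4:ℝ) ^ ((i:ℝ) * q / p)) x) ^ p
      ≤ 2 ^ p * D ^ 5 / (k:ℝ) ^ (p - 1) := by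
  classical
  have hd : 0 < infDist x Ωᶜ := by
    rw [← hΩo.isClosed_compl.notMem_iff_infDist_pos (Set.nonempty_compl.2 hΩprop)]
    simpa using hx
  have hp1 : 1 < p := lt_of_le_of_lt hq1 hqp
  have hp0 : 0 < p := by linarith
  have hq0 : 0 < q := by linarith
  have hg : Measurable g := hlsc.measurable
  have hD0 : 0 < D := by linarith
  have hr : 0 < κ * infDist x Ωᶜ := mul_pos (by linarith) hd
  set d := infDist x Ωᶜ with hd_def
  set r := κ * d with hr_def
  set E : ℕ → Set X := fun i => {z' : X | z' ∈ Ω ∧ (4:ℝ) ^ i * τ < restrMax μ q r g z'}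
    with hE_def
  set hfun : X → ℝ := fun z => (1/(k:ℝ)) * ∑ i ∈ Finset.Icc 1 k,
      ((E i).indicator (fun _ => (1:ℝ)) z) * (4:ℝ) ^ ((i:ℝ) * q / p) with hfun_def
  set RHS := 2 ^ p * D ^ 5 / (k:ℝ) ^ (p-1) with hRHS_def
  have hRHS0 : 0 ≤ RHS := by
    rw [hRHS_def]
    positivity
  have hEm : ∀ i : ℕ, MeasurableSet (E i) := by
    intro i
    have h1 : E i = Ω ∩ {z' : X | (4:ℝ) ^ i * τ < restrMax μ q r g z'} := rfl
    rw [h1]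
    exact (hΩo.inter (isOpen_restrMax_gt hball hg hrange hq0 (by positivity) hr)).measurableSet
  -- the key average estimate
  have claim : ∀ y : X, ∀ t : ℝ, x ∈ ball y t → 0 < t → t < r →
      ⨍ z in ball y t, |hfun z| ^ p ∂μ ≤ RHS := by
    intro y t hxB ht htr
    rcases Nat.eq_zero_or_pos k with hk | hk
    · subst hk
      have hzero : ∀ z, hfun z = 0 := by
        intro z; rw [hfun_def]; simp
      have h0 : (fun z => |hfun z| ^ p) = fun _ => (0:ℝ) := by
        funext z; rw [hzero z, abs_zero, Real.zero_rpow hp0.ne']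
      rw [h0]
      have havg : ⨍ _ in ball y t, (0:ℝ) ∂μ = 0 := by simp
      rw [havg]
      exact hRHS0
    · have hk1 : (1:ℝ) ≤ (k:ℝ) := by exact_mod_cast hk
      have hkpos : (0:ℝ) < (k:ℝ) := by linarith
      set F : X → ℝ := fun z => (2:ℝ)^p / (k:ℝ)^p * ∑ i ∈ Finset.Icc 1 k,
          ((E i).indicator (fun _ => (1:ℝ)) z) * ((4:ℝ)^i) ^ q with hF_def
      have hind_nonneg : ∀ (i : ℕ) (z : X), 0 ≤ (E i).indicator (fun _ => (1:ℝ)) z :=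
        fun i z => Set.indicator_nonneg (fun _ _ => zero_le_one) z
      have hind_le_one : ∀ (i : ℕ) (z : X), (E i).indicator (fun _ => (1:ℝ)) z ≤ 1 := by
        intro i z
        by_cases hz : z ∈ E i
        · rw [Set.indicator_of_mem hz]
        · rw [Set.indicator_of_notMem hz]; exact zero_le_one
      have hF_nonneg : ∀ z, 0 ≤ F z := by
        intro z
        rw [hF_def]
        refine mul_nonneg (by positivity) (Finset.sum_nonneg fun i _ => ?_)
        exact mul_nonneg (hind_nonneg i z) (by positivity)
      have hh_nonneg : ∀ z, 0 ≤ hfun z := by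
        intro z
        rw [hfun_def]
        refine mul_nonneg (by positivity) (Finset.sum_nonneg fun i _ => ?_)
        exact mul_nonneg (hind_nonneg i z) (by positivity)
      -- pointwise bound
      have hpointwise : ∀ z, |hfun z| ^ p ≤ F z := by
        intro z
        rw [abs_of_nonneg (hh_nonneg z)]
        set Sz := (Finset.Icc 1 k).filter (fun i => z ∈ E i) with hSz_def
        have hfz : hfun z = (1/(k:ℝ)) * ∑ i ∈ Sz, (4:ℝ) ^ ((i:ℝ) * q / p) := by
          simp only [hfun_def]
          rw [hSz_def, Finset.sum_filter]
          congr 1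
          refine Finset.sum_congr rfl fun i _ => ?_
          by_cases hzi : z ∈ E i
          · rw [Set.indicator_of_mem hzi, if_pos hzi, one_mul]
          · rw [Set.indicator_of_notMem hzi, if_neg hzi, zero_mul]
        rcases Finset.eq_empty_or_nonempty Sz with hSe | hSne
        · rw [hfz, hSe]
          simp only [Finset.sum_empty, mul_zero]
          rw [Real.zero_rpow hp0.ne']
          exact hF_nonneg z
        · set j := Sz.max' hSne with hj_def
          have hjmem : j ∈ Sz := Sz.max'_mem hSne
          have hj_icc : j ∈ Finset.Icc 1 k := (Finset.mem_filter.1 hjmem).1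
          have hzEj : z ∈ E j := (Finset.mem_filter.1 hjmem).2
          have hjle : ∀ i ∈ Sz, i ≤ j := fun i hi => Sz.le_max' i hi
          set a := (4:ℝ)^(q/p) with ha_def
          have ha2 : (2:ℝ) ≤ a := by
            have hpq2 : p/2 ≤ q := le_trans (le_max_right 1 (p/2)) hmax
            have h12 : (1:ℝ)/2 ≤ q/p := by
              rw [div_le_div_iff₀ (by norm_num) hp0]
              linarith
            calc (2:ℝ) = (4:ℝ)^((1:ℝ)/2) := by
                  rw [show (4:ℝ) = 2^(2:ℕ) by norm_num, ← Real.rpow_natCast (2:ℝ) 2,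
                    ← Real.rpow_mul (by norm_num)]
                  norm_num
              _ ≤ a := Real.rpow_le_rpow_of_exponent_le (by norm_num) h12
          have ha0 : (0:ℝ) < a := by linarith
          have hterm : ∀ i : ℕ, (4:ℝ) ^ ((i:ℝ) * q / p) = a ^ i := by
            intro i
            rw [ha_def, show (i:ℝ) * q / p = q/p * (i:ℝ) by ring,
              Real.rpow_mul (by norm_num : (0:ℝ) ≤ 4), Real.rpow_natCast]
          have hsum1 : ∑ i ∈ Sz, (4:ℝ) ^ ((i:ℝ) * q / p) ≤ 2 * a ^ j := by
            calc ∑ i ∈ Sz, (4:ℝ) ^ ((i:ℝ) * q / p) = ∑ i ∈ Sz, a ^ i :=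
                  Finset.sum_congr rfl fun i _ => hterm i
              _ ≤ ∑ i ∈ Finset.Icc 1 j, a ^ i := by
                  refine Finset.sum_le_sum_of_subset_of_nonneg ?_ (fun i _ _ => by positivity)
                  intro i hi
                  exact Finset.mem_Icc.2
                    ⟨(Finset.mem_Icc.1 (Finset.mem_filter.1 hi).1).1, hjle i hi⟩
              _ ≤ 2 * a ^ j := geom_sum_le ha2 j
          have hhz : hfun z ≤ 2/(k:ℝ) * a ^ j := by
            rw [hfz]
            calc (1/(k:ℝ)) * ∑ i ∈ Sz, (4:ℝ) ^ ((i:ℝ) * q / p)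
                ≤ (1/(k:ℝ)) * (2 * a ^ j) := by
                  exact mul_le_mul_of_nonneg_left hsum1 (by positivity)
              _ = 2/(k:ℝ) * a ^ j := by ring
          have hhp : (hfun z) ^ p ≤ (2/(k:ℝ) * a ^ j) ^ p :=
            Real.rpow_le_rpow (hh_nonneg z) hhz hp0.le
          have hexp : (2/(k:ℝ) * a ^ j) ^ p = (2:ℝ)^p / (k:ℝ)^p * ((4:ℝ)^j) ^ q := by
            rw [Real.mul_rpow (by positivity) (by positivity),
              Real.div_rpow (by norm_num) hkpos.le]
            congr 1
            rw [← hterm j, ← Real.rpow_mul (by norm_num : (0:ℝ) ≤ 4),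
              ← Real.rpow_natCast (4:ℝ) j, ← Real.rpow_mul (by norm_num : (0:ℝ) ≤ 4)]
            congr 1
            field_simp
          have hsingle : ((4:ℝ)^j) ^ q
              ≤ ∑ i ∈ Finset.Icc 1 k, ((E i).indicator (fun _ => (1:ℝ)) z) * ((4:ℝ)^i) ^ q := by
            have hj1 : (E j).indicator (fun _ => (1:ℝ)) z = 1 := Set.indicator_of_mem hzEj _
            calc ((4:ℝ)^j) ^ q = ((E j).indicator (fun _ => (1:ℝ)) z) * ((4:ℝ)^j) ^ q := by
                  rw [hj1, one_mul]
              _ ≤ ∑ i ∈ Finset.Icc 1 k, ((E i).indicator (fun _ => (1:ℝ)) z) * ((4:ℝ)^i) ^ q :=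
                  Finset.single_le_sum
                    (f := fun i => ((E i).indicator (fun _ => (1:ℝ)) z) * ((4:ℝ)^i) ^ q)
                    (fun i _ => mul_nonneg (hind_nonneg i z) (by positivity)) hj_icc
          calc (hfun z) ^ p ≤ (2/(k:ℝ) * a ^ j) ^ p := hhp
            _ = (2:ℝ)^p / (k:ℝ)^p * ((4:ℝ)^j) ^ q := hexp
            _ ≤ F z := by
                rw [hF_def]
                exact mul_le_mul_of_nonneg_left hsingle (by positivity)
      -- integrate
      have hBpos := hball y t ht
      have hμt : μ (ball y t) ≠ ⊤ := hBpos.2.ne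
      have hmtpos : 0 < (μ (ball y t)).toReal := ENNReal.toReal_pos hBpos.1.ne' hμt
      set Fbound := (2:ℝ)^p / (k:ℝ)^p * ∑ i ∈ Finset.Icc 1 k, ((4:ℝ)^i) ^ q with hFb_def
      have hF_le : ∀ z, F z ≤ Fbound := by
        intro z
        rw [hF_def, hFb_def]
        refine mul_le_mul_of_nonneg_left (Finset.sum_le_sum fun i _ => ?_) (by positivity)
        calc ((E i).indicator (fun _ => (1:ℝ)) z) * ((4:ℝ)^i) ^ q
            ≤ 1 * ((4:ℝ)^i) ^ q := mul_le_mul_of_nonneg_right (hind_le_one i z) (by positivity)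
          _ = ((4:ℝ)^i) ^ q := one_mul _
      have hhfun_m : Measurable hfun := by
        rw [hfun_def]
        exact (Finset.measurable_sum _ fun i _ =>
          ((measurable_const.indicator (hEm i)).mul_const _)).const_mul _
      have hF_m : Measurable F := by
        rw [hF_def]
        exact (Finset.measurable_sum _ fun i _ =>
          ((measurable_const.indicator (hEm i)).mul_const _)).const_mul _
      have hint1 : IntegrableOn (fun z => |hfun z| ^ p) (ball y t) μ := by
        refine Measure.integrableOn_of_bounded hμt
          ((hhfun_m.abs.pow_const p).aestronglyMeasurable) (M := Fbound) ?_
        filter_upwards with z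
        rw [Real.norm_eq_abs, abs_of_nonneg (Real.rpow_nonneg (abs_nonneg _) _)]
        exact (hpointwise z).trans (hF_le z)
      have hint2 : IntegrableOn F (ball y t) μ := by
        refine Measure.integrableOn_of_bounded hμt hF_m.aestronglyMeasurable (M := Fbound) ?_
        filter_upwards with z
        rw [Real.norm_eq_abs, abs_of_nonneg (hF_nonneg z)]
        exact hF_le z
      have hmono : ∫ z in ball y t, |hfun z| ^ p ∂μ ≤ ∫ z in ball y t, F z ∂μ :=
        setIntegral_mono hint1 hint2 hpointwise
      -- compute the integral of F
      have hterm_int : ∀ i : ℕ, IntegrableOn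
          (fun z => ((E i).indicator (fun _ => (1:ℝ)) z) * ((4:ℝ)^i) ^ q) (ball y t) μ := by
        intro i
        refine Measure.integrableOn_of_bounded hμt
          (((measurable_const.indicator (hEm i)).mul_const _).aestronglyMeasurable)
          (M := ((4:ℝ)^i) ^ q) ?_
        filter_upwards with z
        rw [Real.norm_eq_abs, abs_of_nonneg (mul_nonneg (hind_nonneg i z) (by positivity))]
        calc ((E i).indicator (fun _ => (1:ℝ)) z) * ((4:ℝ)^i) ^ q
            ≤ 1 * ((4:ℝ)^i) ^ q := mul_le_mul_of_nonneg_right (hind_le_one i z) (by positivity)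
          _ = ((4:ℝ)^i) ^ q := one_mul _
      have hFint : ∫ z in ball y t, F z ∂μ = (2:ℝ)^p / (k:ℝ)^p *
          ∑ i ∈ Finset.Icc 1 k, ((4:ℝ)^i) ^ q * (μ (E i ∩ ball y t)).toReal := by
        rw [hF_def]
        rw [integral_const_mul]
        congr 1
        rw [integral_finset_sum _ (fun i _ => hterm_int i)]
        refine Finset.sum_congr rfl fun i _ => ?_
        rw [integral_mul_const]
        rw [integral_indicator (hEm i)]
        rw [Measure.restrict_restrict (hEm i), setIntegral_const, smul_eq_mul, mul_one, mul_comm (((4:ℝ)^i)^q) _, measureReal_def]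
      -- apply the weak estimate
      have hweak : ∀ i ∈ Finset.Icc 1 k,
          ((4:ℝ)^i) ^ q * (μ (E i ∩ ball y t)).toReal ≤ D^5 * (μ (ball y t)).toReal := by
        intro i hi
        have hi1 : 1 ≤ i := (Finset.mem_Icc.1 hi).1
        have h4A : (4:ℝ) ≤ (4:ℝ)^i := by
          calc (4:ℝ) = 4^(1:ℕ) := (pow_one 4).symm
            _ ≤ 4^i := pow_le_pow_right₀ (by norm_num) hi1
        have hW := weak_estimate hdoub hD hball hg hrange hq1 hτ hr hMg h4A hxB ht htr
        have hmono2 : (μ (E i ∩ ball y t)).toReal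
            ≤ (μ ({z | (4:ℝ)^i * τ < restrMax μ q r g z} ∩ ball y t)).toReal := by
          refine ENNReal.toReal_mono (ne_top_of_le_ne_top hμt (measure_mono inter_subset_right)) ?_
          refine measure_mono (inter_subset_inter_left _ ?_)
          intro z hz
          exact hz.2
        calc ((4:ℝ)^i) ^ q * (μ (E i ∩ ball y t)).toReal
            ≤ ((4:ℝ)^i) ^ q * (μ ({z | (4:ℝ)^i * τ < restrMax μ q r g z} ∩ ball y t)).toReal :=
              mul_le_mul_of_nonneg_left hmono2 (by positivity)
          _ ≤ D^5 * (μ (ball y t)).toReal := hW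
      have hsum_le : ∑ i ∈ Finset.Icc 1 k, ((4:ℝ)^i) ^ q * (μ (E i ∩ ball y t)).toReal
          ≤ (k:ℝ) * (D^5 * (μ (ball y t)).toReal) := by
        calc ∑ i ∈ Finset.Icc 1 k, ((4:ℝ)^i) ^ q * (μ (E i ∩ ball y t)).toReal
            ≤ ∑ _i ∈ Finset.Icc 1 k, D^5 * (μ (ball y t)).toReal := Finset.sum_le_sum hweak
          _ = (k:ℝ) * (D^5 * (μ (ball y t)).toReal) := by
              rw [Finset.sum_const, Nat.card_Icc]
              simp [nsmul_eq_mul]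
      -- put it together
      have hkp : (0:ℝ) < (k:ℝ)^p := Real.rpow_pos_of_pos hkpos p
      calc ⨍ z in ball y t, |hfun z| ^ p ∂μ
          = (μ (ball y t)).toReal⁻¹ * ∫ z in ball y t, |hfun z| ^ p ∂μ := by
            rw [setAverage_eq, smul_eq_mul]
            rfl
        _ ≤ (μ (ball y t)).toReal⁻¹ * ((2:ℝ)^p / (k:ℝ)^p *
              ((k:ℝ) * (D^5 * (μ (ball y t)).toReal))) := by
            refine mul_le_mul_of_nonneg_left ?_ (by positivity)
            refine hmono.trans ?_
            rw [hFint]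
            exact mul_le_mul_of_nonneg_left hsum_le (by positivity)
        _ = (2:ℝ)^p / (k:ℝ)^p * ((k:ℝ) * D^5) * ((μ (ball y t)).toReal⁻¹ *
              (μ (ball y t)).toReal) := by ring
        _ = (2:ℝ)^p / (k:ℝ)^p * ((k:ℝ) * D^5) := by
            rw [inv_mul_cancel₀ hmtpos.ne', mul_one]
        _ = RHS := by
            rw [hRHS_def, Real.rpow_sub hkpos, Real.rpow_one]
            field_simp
  -- conclude
  rw [restrMax, if_neg hr.ne']
  have hub : ∀ m ∈ {m | ∃ y t, x ∈ ball y t ∧ 0 < t ∧ t < r ∧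
      m = (⨍ z in ball y t, |hfun z| ^ p ∂μ) ^ (1/p)}, m ≤ RHS ^ (1/p) := by
    rintro m ⟨y, t, hxB, ht, htr, rfl⟩
    exact Real.rpow_le_rpow (setAvg_nonneg (fun z => by positivity) _)
      (claim y t hxB ht htr) (by positivity)
  have h1 : sSup {m | ∃ y t, x ∈ ball y t ∧ 0 < t ∧ t < r ∧
      m = (⨍ z in ball y t, |hfun z| ^ p ∂μ) ^ (1/p)} ≤ RHS ^ (1/p) :=
    Real.sSup_le hub (by positivity)
  have hmem0 : ((⨍ z in ball x (r/2), |hfun z| ^ p ∂μ) ^ (1/p)) ∈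
      {m | ∃ y t, x ∈ ball y t ∧ 0 < t ∧ t < r ∧
        m = (⨍ z in ball y t, |hfun z| ^ p ∂μ) ^ (1/p)} :=
    ⟨x, r/2, mem_ball_self (by linarith), by linarith, by linarith, rfl⟩
  have h2 : 0 ≤ sSup {m | ∃ y t, x ∈ ball y t ∧ 0 < t ∧ t < r ∧
      m = (⨍ z in ball y t, |hfun z| ^ p ∂μ) ^ (1/p)} := by
    refine le_trans (Real.rpow_nonneg (setAvg_nonneg (fun z => by positivity) _) _)
      (le_csSup ⟨RHS ^ (1/p), hub⟩ hmem0)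
  calc (sSup {m | ∃ y t, x ∈ ball y t ∧ 0 < t ∧ t < r ∧
      m = (⨍ z in ball y t, |hfun z| ^ p ∂μ) ^ (1/p)}) ^ p
      ≤ (RHS ^ (1/p)) ^ p := Real.rpow_le_rpow h2 h1 hp0.le
    _ = RHS := by rw [one_div, Real.rpow_inv_rpow hRHS0 hp0.ne']
end
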